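/- arXiv:1502.03607 — 3 statements merged into one kernel-verified Lean document; each statement's English description precedes it below -/
import Mathlib

section
/- Let (A, (·,·), R) be a locally finite root supersystem over a field F of characteristic zero. Then there exists a sub-supersystem S of R with S_ns = R_ns and ⟨S⟩ = ⟨R⟩ = A such that for every α ∈ S and every δ ∈ S_ns with (α, δ) ≠ 0 there is a unique r ∈ {1, −1} with α + rδ ∈ S. -/
open Pointwise

/-- A symmetric biadditive form with values in `F`. -/
structure IsSymForm {F : Type*} [Field F] {A : Type*} [AddCommGroup A]
    (form : A → A → F) : Prop where
  symm : ∀ a b, form a b = form b a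
  add_left : ∀ a b c, form (a + b) c = form a c + form b c

/-- The radical `A⁰` of a form. -/
def formRadical {F : Type*} [Field F] {A : Type*} [AddCommGroup A]
    (form : A → A → F) : Set A := {a | ∀ b, form a b = 0}

/-- The set of real roots `R_re = {α ∈ R | (α,α) ≠ 0} ∪ {0}`. -/
def reRoots {F : Type*} [Field F] {A : Type*} [AddCommGroup A]
    (form : A → A → F) (R : Set A) : Set A :=
  {α | α ∈ R ∧ form α α ≠ 0} ∪ {0}

/-- The set of nonsingular roots `R_ns = {α ∈ R \ A⁰ | (α,α) = 0} ∪ {0}`. -/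
def nsRoots {F : Type*} [Field F] {A : Type*} [AddCommGroup A]
    (form : A → A → F) (R : Set A) : Set A :=
  {α | α ∈ R ∧ form α α = 0 ∧ α ∉ formRadical form} ∪ {0}

/-- Extended affine root supersystem. -/
structure IsEARS {F : Type*} [Field F] [CharZero F] {A : Type*} [AddCommGroup A]
    (form : A → A → F) (R : Set A) extends IsSymForm form : Prop where
  zero_mem : (0 : A) ∈ R
  closure_eq_top : AddSubgroup.closure R = ⊤
  neg_mem : ∀ α ∈ R, -α ∈ R
  cartan : ∀ α ∈ R, form α α ≠ 0 → ∀ β ∈ R, ∃ k : ℤ, 2 * form α β = (k : F) * form α α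
  string : ∀ α ∈ R, form α α ≠ 0 → ∀ β ∈ R, ∃ p q : ℕ,
      2 * form β α = ((p : F) - (q : F)) * form α α ∧
      (∀ k : ℤ, β + k • α ∈ R ↔ -(p : ℤ) ≤ k ∧ k ≤ (q : ℤ))
  ns_string : ∀ α ∈ R, form α α = 0 → ∀ β ∈ R, form α β ≠ 0 →
      (β - α ∈ R ∨ β + α ∈ R)

/-- Locally finite root supersystem: an EARS with nondegenerate form. -/
def IsLFRSS {F : Type*} [Field F] [CharZero F] {A : Type*} [AddCommGroup A]
    (form : A → A → F) (R : Set A) : Prop :=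
  IsEARS form R ∧ ∀ a : A, (∀ b, form a b = 0) → a = 0

/-- `α` and `β` are connected in `X` by a finite chain with consecutive
elements non-orthogonal. -/
def ConnectedIn {F : Type*} [Field F] {A : Type*} [AddCommGroup A]
    (form : A → A → F) (X : Set A) (α β : A) : Prop :=
  ∃ (n : ℕ) (c : Fin (n + 1) → A), (∀ i, c i ∈ X) ∧ c 0 = α ∧ c (Fin.last n) = β ∧
    ∀ i : Fin n, form (c i.castSucc) (c i.succ) ≠ 0

/-- A connected subset. -/
def IsConnectedSet {F : Type*} [Field F] {A : Type*} [AddCommGroup A]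
    (form : A → A → F) (X : Set A) : Prop :=
  ∀ α ∈ X, ∀ β ∈ X, ConnectedIn form X α β

/-- Irreducibility: `R_re ≠ {0}` and `R \ R⁰` is connected. -/
def IsIrreducibleRSS {F : Type*} [Field F] {A : Type*} [AddCommGroup A]
    (form : A → A → F) (R : Set A) : Prop :=
  reRoots form R ≠ {0} ∧ IsConnectedSet form (R \ formRadical form)

/-- Sub-supersystem of a locally finite root supersystem. -/
def IsSubSupersystem {F : Type*} [Field F] {A : Type*} [AddCommGroup A]
    (form : A → A → F) (R S : Set A) : Prop :=
  S ⊆ R ∧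
  (∀ a ∈ AddSubgroup.closure S, (∀ b ∈ AddSubgroup.closure S, form a b = 0) → a = 0) ∧
  (0 : A) ∈ S ∧
  (∀ α ∈ S, form α α ≠ 0 → ∀ β ∈ S, ∀ k : ℤ,
      2 * form β α = (k : F) * form α α → β - k • α ∈ S) ∧
  (∀ γ ∈ S, form γ γ = 0 → ∀ β ∈ S, form β γ ≠ 0 → (γ - β ∈ S ∨ γ + β ∈ S))

/-- `Π` is an integral base of `R` (a `ℤ`-basis of the group generated by `R`). -/
def IsIntegralBase {F : Type*} [Field F] {A : Type*} [AddCommGroup A]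
    (form : A → A → F) (R P : Set A) : Prop :=
  P ⊆ R ∧ LinearIndependent ℤ (fun p : P => (p : A)) ∧
    Submodule.span ℤ P = Submodule.span ℤ R

/-- `Π` is a base of `R`. -/
def IsBase {F : Type*} [Field F] {A : Type*} [AddCommGroup A]
    (form : A → A → F) (R P : Set A) : Prop :=
  IsIntegralBase form R P ∧
  ∀ α ∈ R \ formRadical form, ∃ (n : ℕ) (a : Fin n → A) (r : Fin n → ℤ),
    (∀ i, a i ∈ P) ∧ (∀ i, r i = 1 ∨ r i = -1) ∧
    α = ∑ i, r i • a i ∧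
    ∀ t : Fin n, (∑ i ∈ Finset.Iic t, r i • a i) ∈ R \ formRadical form

namespace Stmt14Aux

variable {F : Type*} [Field F] {A : Type*} [AddCommGroup A] {form : A → A → F}
  {R : Set A}

/-- the form as an additive hom in the left variable -/
def homL (hs : IsSymForm form) (b : A) : A →+ F :=
  AddMonoidHom.mk' (fun a => form a b) (fun x y => hs.add_left x y b)

lemma addL (hs : IsSymForm form) (a b c : A) :
    form (a + b) c = form a c + form b c := hs.add_left a b c
lemma subL (hs : IsSymForm form) (a b c : A) :
    form (a - b) c = form a c - form b c := map_sub (homL hs c) a b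
lemma negL (hs : IsSymForm form) (a b : A) : form (-a) b = - form a b :=
  map_neg (homL hs b) a
lemma zeroL (hs : IsSymForm form) (a : A) : form 0 a = 0 := map_zero (homL hs a)
lemma zsmulL (hs : IsSymForm form) (k : ℤ) (a b : A) :
    form (k • a) b = (k : F) * form a b := by
  have h := map_zsmul (homL hs b) k a
  rw [zsmul_eq_mul] at h
  exact h
lemma addR (hs : IsSymForm form) (a b c : A) :
    form a (b + c) = form a b + form a c := by
  rw [hs.symm a (b + c), addL hs, hs.symm b a, hs.symm c a]
lemma subR (hs : IsSymForm form) (a b c : A) :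
    form a (b - c) = form a b - form a c := by
  rw [hs.symm a (b - c), subL hs, hs.symm b a, hs.symm c a]
lemma negR (hs : IsSymForm form) (a b : A) : form a (-b) = - form a b := by
  rw [hs.symm a (-b), negL hs, hs.symm b a]
lemma zeroR (hs : IsSymForm form) (a : A) : form a 0 = 0 := by
  rw [hs.symm, zeroL hs]
lemma zsmulR (hs : IsSymForm form) (k : ℤ) (a b : A) :
    form a (k • b) = (k : F) * form a b := by
  rw [hs.symm a (k • b), zsmulL hs, hs.symm b a]

end Stmt14Aux
namespace Stmt14Aux

variable {F : Type*} [Field F] [CharZero F] {A : Type*} [AddCommGroup A]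
  {form : A → A → F} {R : Set A}

/-- From the string axiom: if `2(β,x) = n(x,x)` then `β - j•x ∈ R` for all `j`
between `0` and `n`. -/
lemma string_interval (hE : IsEARS form R) {x β : A} (hx : x ∈ R)
    (hxx : form x x ≠ 0) (hβ : β ∈ R) {n : ℤ}
    (hval : 2 * form β x = (n : F) * form x x) :
    ∀ j : ℤ, ((0 ≤ j ∧ j ≤ n) ∨ (n ≤ j ∧ j ≤ 0)) → β - j • x ∈ R := by
  obtain ⟨p, q, h1, h2⟩ := hE.string x hx hxx β hβ
  have hcast : ((p : F) - (q : F)) = (n : F) :=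
    mul_right_cancel₀ hxx (by linear_combination hval - h1)
  have hn : (p : ℤ) - (q : ℤ) = n := by exact_mod_cast hcast
  intro j hj
  have hmem := (h2 (-j)).mpr ⟨by omega, by omega⟩
  simpa [neg_zsmul, ← sub_eq_add_neg] using hmem

lemma string_one (hE : IsEARS form R) {x β : A} (hx : x ∈ R)
    (hxx : form x x ≠ 0) (hβ : β ∈ R) {n : ℤ}
    (hval : 2 * form β x = (n : F) * form x x) (h1 : 1 ≤ n) : β - x ∈ R := by
  have := string_interval hE hx hxx hβ hval 1 (Or.inl ⟨by omega, h1⟩)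
  simpa using this

lemma string_two (hE : IsEARS form R) {x β : A} (hx : x ∈ R)
    (hxx : form x x ≠ 0) (hβ : β ∈ R) {n : ℤ}
    (hval : 2 * form β x = (n : F) * form x x) (h1 : 2 ≤ n) : β - x - x ∈ R := by
  have := string_interval hE hx hxx hβ hval 2 (Or.inl ⟨by omega, h1⟩)
  have e : (2 : ℤ) • x = x + x := two_zsmul x
  rw [e, sub_add_eq_sub_sub] at this
  exact this

lemma string_three (hE : IsEARS form R) {x β : A} (hx : x ∈ R)
    (hxx : form x x ≠ 0) (hβ : β ∈ R) {n : ℤ}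
    (hval : 2 * form β x = (n : F) * form x x) (h1 : 3 ≤ n) :
    β - x - x - x ∈ R := by
  have := string_interval hE hx hxx hβ hval 3 (Or.inl ⟨by omega, h1⟩)
  have e : (3 : ℤ) • x = x + x + x := by
    rw [show (3 : ℤ) = 2 + 1 by norm_num, add_zsmul, two_zsmul, one_zsmul]
  rw [e, sub_add_eq_sub_sub, sub_add_eq_sub_sub] at this
  exact this

lemma string_negone (hE : IsEARS form R) {x β : A} (hx : x ∈ R)
    (hxx : form x x ≠ 0) (hβ : β ∈ R) {n : ℤ}
    (hval : 2 * form β x = (n : F) * form x x) (h1 : n ≤ -1) : β + x ∈ R := by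
  have := string_interval hE hx hxx hβ hval (-1) (Or.inr ⟨h1, by omega⟩)
  simpa [neg_zsmul, sub_neg_eq_add] using this

lemma string_negtwo (hE : IsEARS form R) {x β : A} (hx : x ∈ R)
    (hxx : form x x ≠ 0) (hβ : β ∈ R) {n : ℤ}
    (hval : 2 * form β x = (n : F) * form x x) (h1 : n ≤ -2) : β + x + x ∈ R := by
  have := string_interval hE hx hxx hβ hval (-2) (Or.inr ⟨h1, by omega⟩)
  have e : (-2 : ℤ) • x = -(x + x) := by rw [neg_zsmul, two_zsmul]
  rw [e, sub_neg_eq_add, ← add_assoc] at this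
  exact this

/-- Perp trick: if `(β,x) = 0` and `β - x ∈ R` then `β + x ∈ R`. -/
lemma string_perp (hE : IsEARS form R) {x β : A} (hx : x ∈ R)
    (hxx : form x x ≠ 0) (hβ : β ∈ R) (hperp : form β x = 0)
    (hmem : β - x ∈ R) : β + x ∈ R := by
  obtain ⟨p, q, h1, h2⟩ := hE.string x hx hxx β hβ
  have hcast : ((p : F) - (q : F)) = 0 :=
    mul_right_cancel₀ hxx (by linear_combination - h1 + 2 * hperp)
  have hpq : (p : ℤ) = (q : ℤ) := by
    have : ((p : F)) = (q : F) := by linear_combination hcast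
    exact_mod_cast this
  have hm : β + (-1 : ℤ) • x ∈ R := by
    simpa [neg_zsmul, ← sub_eq_add_neg] using hmem
  have hp := (h2 (-1)).mp hm
  have := (h2 1).mpr ⟨by omega, by omega⟩
  simpa using this

end Stmt14Aux
namespace Stmt14Aux

variable {F : Type*} [Field F] [CharZero F] {A : Type*} [AddCommGroup A]
  {form : A → A → F} {R : Set A}

/-- If `γ` is nonsingular, `x` real, `γ + x ∈ R`, then `n ∈ {-1, -2}` where
`2(γ,x) = n(x,x)`. -/
lemma ns_plus (hE : IsEARS form R) {x γ : A} (hx : x ∈ R) (hxx : form x x ≠ 0)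
    (hγ : γ ∈ R) (hγγ : form γ γ = 0) {n : ℤ}
    (hval : 2 * form γ x = (n : F) * form x x) (hn0 : form γ x ≠ 0)
    (hp : γ + x ∈ R) : n = -1 ∨ n = -2 := by
  have hs := hE.toIsSymForm
  have hnz : n ≠ 0 := by
    rintro rfl
    simp only [Int.cast_zero, zero_mul] at hval
    exact hn0 (by linear_combination hval / 2)
  by_cases hn1 : n = -1
  · exact Or.inl hn1
  · -- the norm of γ + x is (n+1)(x,x) ≠ 0
    have hnorm : form (γ + x) (γ + x) = ((n + 1 : ℤ) : F) * form x x := by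
      push_cast
      rw [addL hs, addR hs, addR hs, hγγ, hs.symm x γ]
      linear_combination hval
    have hne : form (γ + x) (γ + x) ≠ 0 := by
      rw [hnorm]
      exact mul_ne_zero (Int.cast_ne_zero.mpr (by omega)) hxx
    obtain ⟨m, hm⟩ := hE.cartan (γ + x) hp hne γ hγ
    -- 2 (γ+x, γ) = 2 (γ,x) = n(x,x) ; RHS = m (n+1)(x,x)
    have hl : form (γ + x) γ = form γ x := by
      rw [addL hs, hγγ, hs.symm x γ]
      ring
    rw [hl, hnorm] at hm
    have key : (n : F) = ((m * (n + 1) : ℤ) : F) := by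
      push_cast at hm ⊢
      refine mul_right_cancel₀ hxx ?_
      linear_combination hm - hval
    have keyZ : n = m * (n + 1) := by exact_mod_cast key
    have hdvd : (n + 1) ∣ n := Dvd.intro_left m keyZ.symm
    have hone : (n + 1) ∣ 1 := by
      have := dvd_sub (dvd_refl (n + 1)) hdvd
      simpa using this
    have := Int.isUnit_iff.mp (isUnit_of_dvd_one hone)
    omega

/-- L1: for a real root `x` and nonsingular `γ` with `(γ,x) ≠ 0`: exactly one of
`γ ± x` is a root, determined by the sign of the Cartan integer which is `±1, ±2`. -/
lemma ns_real (hE : IsEARS form R) {x γ : A} (hx : x ∈ R) (hxx : form x x ≠ 0)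
    (hγ : γ ∈ R) (hγγ : form γ γ = 0) {n : ℤ}
    (hval : 2 * form γ x = (n : F) * form x x) (hn0 : form γ x ≠ 0) :
    ((n = 1 ∨ n = 2) ∧ γ - x ∈ R ∧ γ + x ∉ R) ∨
      ((n = -1 ∨ n = -2) ∧ γ + x ∈ R ∧ γ - x ∉ R) := by
  have hs := hE.toIsSymForm
  have hmx : -x ∈ R := hE.neg_mem x hx
  have hminus : γ - x ∈ R → (n = 1 ∨ n = 2) := by
    intro hm
    have hval' : 2 * form γ (-x) = ((-n : ℤ) : F) * form (-x) (-x) := by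
      rw [negR hs, negL hs, negR hs]
      push_cast
      linear_combination - hval
    have hn0' : form γ (-x) ≠ 0 := by
      rw [negR hs]; exact neg_ne_zero.mpr hn0
    have hxx' : form (-x) (-x) ≠ 0 := by
      rw [negL hs, negR hs]; simpa using hxx
    have hp : γ + -x ∈ R := by rwa [← sub_eq_add_neg]
    have := ns_plus hE hmx hxx' hγ hγγ hval' hn0' hp
    omega
  have hplus : γ + x ∈ R → (n = -1 ∨ n = -2) :=
    fun hp => ns_plus hE hx hxx hγ hγγ hval hn0 hp
  have hex : γ - x ∈ R ∨ γ + x ∈ R := by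
    have h5 := hE.ns_string γ hγ hγγ x hx hn0
    rcases h5 with h | h
    · left
      have := hE.neg_mem _ h
      rwa [neg_sub] at this
    · right
      rwa [add_comm] at h
  rcases hex with h | h
  · have h12 := hminus h
    refine Or.inl ⟨h12, h, fun hp => ?_⟩
    have := hplus hp
    omega
  · have h12 := hplus h
    refine Or.inr ⟨h12, h, fun hm => ?_⟩
    have := hminus hm
    omega

/-- The Cartan integer of a nonsingular root against a real root lies in `[-2,2]`. -/
lemma ns_bound (hE : IsEARS form R) {x γ : A} (hx : x ∈ R) (hxx : form x x ≠ 0)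
    (hγ : γ ∈ R) (hγγ : form γ γ = 0) {n : ℤ}
    (hval : 2 * form γ x = (n : F) * form x x) (hn0 : form γ x ≠ 0) :
    n = 1 ∨ n = 2 ∨ n = -1 ∨ n = -2 := by
  rcases ns_real hE hx hxx hγ hγγ hval hn0 with ⟨h, -, -⟩ | ⟨h, -, -⟩ <;> omega

end Stmt14Aux
namespace Stmt14Aux

variable {F : Type*} [Field F] [CharZero F] {A : Type*} [AddCommGroup A]
  {form : A → A → F} {R : Set A}

/-- If a nonzero element pairs nontrivially with something, it pairs nontrivially
with some root. -/
lemma exists_root_pairing (hE : IsEARS form R) {π : A} {b : A}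
    (hb : form π b ≠ 0) : ∃ μ ∈ R, form π μ ≠ 0 := by
  have hs := hE.toIsSymForm
  by_contra hall
  push_neg at hall
  have hK : ∀ c : A, form π c = 0 := by
    intro c
    let K : AddSubgroup A :=
      { carrier := {c | form π c = 0}
        zero_mem' := zeroR hs π
        add_mem' := by
          intro u v hu hv
          simp only [Set.mem_setOf_eq] at hu hv ⊢
          rw [addR hs, hu, hv, add_zero]
        neg_mem' := by
          intro u hu
          simp only [Set.mem_setOf_eq] at hu ⊢
          rw [negR hs, hu, neg_zero] }
    have hle : AddSubgroup.closure R ≤ K :=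
      (AddSubgroup.closure_le K).mpr (fun μ hμ => hall μ hμ)
    have : c ∈ AddSubgroup.closure R := by rw [hE.closure_eq_top]; trivial
    exact hle this
  exact hb (hK b)

/-- If `π` and `π+π+π` are both isotropic roots, then `π` is in the radical,
hence zero by nondegeneracy. -/
lemma triple_isotropic (hL : IsLFRSS form R) {π : A} (hπ : π ∈ R)
    (hππ : form π π = 0) (h3 : π + π + π ∈ R) : π = 0 := by
  obtain ⟨hE, hnd⟩ := hL
  have hs := hE.toIsSymForm
  by_contra hne
  have hb : ∃ b, form π b ≠ 0 := by
    by_contra hall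
    push_neg at hall
    exact hne (hnd π hall)
  obtain ⟨b, hb⟩ := hb
  obtain ⟨μ, hμR, hμ⟩ := exists_root_pairing hE hb
  -- produce a REAL root y with (π,y) ≠ 0
  obtain ⟨y, hyR, hyy, hy⟩ : ∃ y ∈ R, form y y ≠ 0 ∧ form π y ≠ 0 := by
    by_cases hμμ : form μ μ = 0
    · rcases hE.ns_string π hπ hππ μ hμR hμ with h | h
      · refine ⟨μ - π, h, ?_, ?_⟩
        · rw [subL hs, subR hs, subR hs, hμμ, hππ, hs.symm μ π]
          intro hzero
          apply hμ
          have : -(2 * form π μ) = 0 := by linear_combination hzero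
          have h2 : (2 : F) * form π μ = 0 := by linear_combination - this
          rcases mul_eq_zero.mp h2 with h' | h'
          · exact absurd h' two_ne_zero
          · exact h'
        · rw [subR hs, hππ, sub_zero]
          exact hμ
      · refine ⟨μ + π, h, ?_, ?_⟩
        · rw [addL hs, addR hs, addR hs, hμμ, hππ, hs.symm μ π]
          intro hzero
          apply hμ
          have h2 : (2 : F) * form π μ = 0 := by linear_combination hzero
          rcases mul_eq_zero.mp h2 with h' | h'
          · exact absurd h' two_ne_zero
          · exact h'
        · rw [addR hs, hππ, add_zero]
          exact hμ
    · exact ⟨μ, hμR, hμμ, hμ⟩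
  -- Cartan integers of π and 3π against y
  obtain ⟨k, hk⟩ := hE.cartan y hyR hyy π hπ
  obtain ⟨k3, hk3⟩ := hE.cartan y hyR hyy (π + π + π) h3
  have hval : 2 * form π y = (k : F) * form y y := by
    rw [hs.symm π y]; exact hk
  have h3y : form (π + π + π) y = 3 * form π y := by
    rw [addL hs, addL hs]; ring
  have hval3 : 2 * form (π + π + π) y = ((3 * k : ℤ) : F) * form y y := by
    rw [h3y]
    push_cast
    linear_combination 3 * hval
  have h33 : form (π + π + π) (π + π + π) = 0 := by
    simp [addL hs, addR hs, hππ]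
  have h3ne : form (π + π + π) y ≠ 0 := by
    rw [h3y]
    exact mul_ne_zero three_ne_zero hy
  have hb1 := ns_bound hE hyR hyy hπ hππ hval hy
  have hb3 := ns_bound hE hyR hyy h3 h33 hval3 h3ne
  omega

end Stmt14Aux
namespace Stmt14Aux

variable {F : Type*} [Field F] [CharZero F] {A : Type*} [AddCommGroup A]
  {form : A → A → F} {R : Set A}

lemma intz {t : F} (ht : t ≠ 0) {k : ℤ} (h : (k : F) * t = 0) : k = 0 := by
  rcases mul_eq_zero.mp h with h0 | h0
  · exact_mod_cast h0
  · exact absurd h0 ht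

section K2

variable (hE : IsEARS form R) {δ₁ δ₁' γ : A}

/-- K2', branch `(γ,δ₁) = t`. -/
lemma k2_case_t (hE : IsEARS form R) {δ₁ δ₁' γ : A}
    (hd1R : δ₁ ∈ R) (hd1 : form δ₁ δ₁ = 0)
    (hd1'R : δ₁' ∈ R) (hd1' : form δ₁' δ₁' = 0)
    (ht : form δ₁ δ₁' ≠ 0)
    (hzR : δ₁ + δ₁' ∈ R)
    (hγR : γ ∈ R) (hγγ : form γ γ = 0)
    (ha : form γ δ₁ = form δ₁ δ₁') (hb : form γ δ₁' = form δ₁ δ₁') : False := by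
  have hs := hE.toIsSymForm
  have hy1 : form δ₁' δ₁ = form δ₁ δ₁' := hs.symm _ _
  have hy2 : form δ₁ γ = form γ δ₁ := hs.symm _ _
  have hy3 : form δ₁' γ = form γ δ₁' := hs.symm _ _
  have hzz : form (δ₁ + δ₁') (δ₁ + δ₁') = 2 * form δ₁ δ₁' := by
    simp only [addL hs, addR hs, hd1, hd1', hy1]; ring
  have hzz0 : form (δ₁ + δ₁') (δ₁ + δ₁') ≠ 0 := by
    rw [hzz]; exact mul_ne_zero two_ne_zero ht
  have hδγ : form δ₁ γ ≠ 0 := by rw [hy2, ha]; exact ht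
  rcases hE.ns_string δ₁ hd1R hd1 γ hγR hδγ with hm | hp
  · -- γ - δ₁ ∈ R
    have hval1 : 2 * form (γ - δ₁) (δ₁ + δ₁') =
        ((1 : ℤ) : F) * form (δ₁ + δ₁') (δ₁ + δ₁') := by
      push_cast
      simp only [subL hs, addL hs, addR hs, hd1, hd1', hy1, hy2, hy3, ha, hb]
      ring
    have hv : γ - δ₁ - (δ₁ + δ₁') ∈ R := string_one hE hzR hzz0 hm hval1 le_rfl
    have hvv : form (γ - δ₁ - (δ₁ + δ₁')) (γ - δ₁ - (δ₁ + δ₁')) =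
        -(2 * form δ₁ δ₁') := by
      simp only [subL hs, subR hs, addL hs, addR hs, hd1, hd1', hγγ, hy1, hy2,
        hy3, ha, hb]
      ring
    have hvv0 : form (γ - δ₁ - (δ₁ + δ₁')) (γ - δ₁ - (δ₁ + δ₁')) ≠ 0 := by
      rw [hvv]; exact neg_ne_zero.mpr (mul_ne_zero two_ne_zero ht)
    have hval3 : 2 * form γ (γ - δ₁ - (δ₁ + δ₁')) =
        ((3 : ℤ) : F) * form (γ - δ₁ - (δ₁ + δ₁')) (γ - δ₁ - (δ₁ + δ₁')) := by
      push_cast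
      rw [hvv]
      simp only [subR hs, addR hs, hγγ, ha, hb]
      ring
    have he : form γ (γ - δ₁ - (δ₁ + δ₁')) = -(3 * form δ₁ δ₁') := by
      simp only [subR hs, addR hs, hγγ, ha, hb]; ring
    have hn0 : form γ (γ - δ₁ - (δ₁ + δ₁')) ≠ 0 := by
      rw [he]; exact neg_ne_zero.mpr (mul_ne_zero three_ne_zero ht)
    have := ns_bound hE hv hvv0 hγR hγγ hval3 hn0
    omega
  · -- γ + δ₁ ∈ R
    have hval3 : 2 * form (γ + δ₁) (δ₁ + δ₁') =
        ((3 : ℤ) : F) * form (δ₁ + δ₁') (δ₁ + δ₁') := by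
      push_cast
      simp only [addL hs, addR hs, hd1, hd1', hy1, hy2, hy3, ha, hb]
      ring
    have hv : γ + δ₁ - (δ₁ + δ₁') - (δ₁ + δ₁') - (δ₁ + δ₁') ∈ R :=
      string_three hE hzR hzz0 hp hval3 le_rfl
    have hvv : form (γ + δ₁ - (δ₁ + δ₁') - (δ₁ + δ₁') - (δ₁ + δ₁'))
        (γ + δ₁ - (δ₁ + δ₁') - (δ₁ + δ₁') - (δ₁ + δ₁')) = 2 * form δ₁ δ₁' := by
      simp only [subL hs, subR hs, addL hs, addR hs, hd1, hd1', hγγ, hy1, hy2,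
        hy3, ha, hb]
      ring
    have hvv0 : form (γ + δ₁ - (δ₁ + δ₁') - (δ₁ + δ₁') - (δ₁ + δ₁'))
        (γ + δ₁ - (δ₁ + δ₁') - (δ₁ + δ₁') - (δ₁ + δ₁')) ≠ 0 := by
      rw [hvv]; exact mul_ne_zero two_ne_zero ht
    have hval5 : 2 * form γ (γ + δ₁ - (δ₁ + δ₁') - (δ₁ + δ₁') - (δ₁ + δ₁')) =
        ((-5 : ℤ) : F) * form (γ + δ₁ - (δ₁ + δ₁') - (δ₁ + δ₁') - (δ₁ + δ₁'))
          (γ + δ₁ - (δ₁ + δ₁') - (δ₁ + δ₁') - (δ₁ + δ₁')) := by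
      push_cast
      rw [hvv]
      simp only [subR hs, addR hs, hγγ, ha, hb]
      ring
    have he : form γ (γ + δ₁ - (δ₁ + δ₁') - (δ₁ + δ₁') - (δ₁ + δ₁')) =
        -(5 * form δ₁ δ₁') := by
      simp only [subR hs, addR hs, hγγ, ha, hb]; ring
    have hn0 : form γ (γ + δ₁ - (δ₁ + δ₁') - (δ₁ + δ₁') - (δ₁ + δ₁')) ≠ 0 := by
      rw [he]; exact neg_ne_zero.mpr (mul_ne_zero (by norm_num) ht)
    have := ns_bound hE hv hvv0 hγR hγγ hval5 hn0
    omega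

end K2

end Stmt14Aux
namespace Stmt14Aux

variable {F : Type*} [Field F] [CharZero F] {A : Type*} [AddCommGroup A]
  {form : A → A → F} {R : Set A}

/-- K2', branch `2(γ,δ₁) = t`. -/
lemma k2_case_half (hE : IsEARS form R) {δ₁ δ₁' γ : A}
    (hd1R : δ₁ ∈ R) (hd1 : form δ₁ δ₁ = 0)
    (hd1'R : δ₁' ∈ R) (hd1' : form δ₁' δ₁' = 0)
    (ht : form δ₁ δ₁' ≠ 0)
    (hzR : δ₁ + δ₁' ∈ R)
    (hγR : γ ∈ R) (hγγ : form γ γ = 0)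
    (h2a : 2 * form γ δ₁ = form δ₁ δ₁')
    (hsum : form γ δ₁ + form γ δ₁' = 2 * form δ₁ δ₁') : False := by
  have hs := hE.toIsSymForm
  have hy1 : form δ₁' δ₁ = form δ₁ δ₁' := hs.symm _ _
  have hy2 : form δ₁ γ = form γ δ₁ := hs.symm _ _
  have hy3 : form δ₁' γ = form γ δ₁' := hs.symm _ _
  have ha : form γ δ₁ = form δ₁ δ₁' / 2 := by
    field_simp; linear_combination h2a
  have hb : form γ δ₁' = 3 * form δ₁ δ₁' / 2 := by
    field_simp; linear_combination 2 * hsum - h2a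
  have hzz : form (δ₁ + δ₁') (δ₁ + δ₁') = 2 * form δ₁ δ₁' := by
    simp only [addL hs, addR hs, hd1, hd1', hy1]; ring
  have hzz0 : form (δ₁ + δ₁') (δ₁ + δ₁') ≠ 0 := by
    rw [hzz]; exact mul_ne_zero two_ne_zero ht
  have hδγ : form δ₁ γ ≠ 0 := by
    rw [hy2, ha]; exact div_ne_zero ht two_ne_zero
  rcases hE.ns_string δ₁ hd1R hd1 γ hγR hδγ with hm | hp
  · -- γ - δ₁ ∈ R : walk down the z-string then hit Cartan 5
    have hval1 : 2 * form (γ - δ₁) (δ₁ + δ₁') =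
        ((1 : ℤ) : F) * form (δ₁ + δ₁') (δ₁ + δ₁') := by
      push_cast
      simp only [subL hs, addL hs, addR hs, hd1, hd1', hy1, hy2, hy3, ha, hb]
      ring
    have hv : γ - δ₁ - (δ₁ + δ₁') ∈ R := string_one hE hzR hzz0 hm hval1 le_rfl
    have hvv : form (γ - δ₁ - (δ₁ + δ₁')) (γ - δ₁ - (δ₁ + δ₁')) =
        -(form δ₁ δ₁') := by
      simp only [subL hs, subR hs, addL hs, addR hs, hd1, hd1', hγγ, hy1, hy2,
        hy3, ha, hb]
      ring
    have hvv0 : form (γ - δ₁ - (δ₁ + δ₁')) (γ - δ₁ - (δ₁ + δ₁')) ≠ 0 := by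
      rw [hvv]; exact neg_ne_zero.mpr ht
    have hval5 : 2 * form γ (γ - δ₁ - (δ₁ + δ₁')) =
        ((5 : ℤ) : F) * form (γ - δ₁ - (δ₁ + δ₁')) (γ - δ₁ - (δ₁ + δ₁')) := by
      push_cast
      rw [hvv]
      simp only [subR hs, addR hs, hγγ, ha, hb]
      ring
    have he : form γ (γ - δ₁ - (δ₁ + δ₁')) = -(5 * form δ₁ δ₁' / 2) := by
      simp only [subR hs, addR hs, hγγ, ha, hb]; ring
    have hn0 : form γ (γ - δ₁ - (δ₁ + δ₁')) ≠ 0 := by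
      rw [he]
      exact neg_ne_zero.mpr (div_ne_zero (mul_ne_zero (by norm_num) ht)
        two_ne_zero)
    have := ns_bound hE hv hvv0 hγR hγγ hval5 hn0
    omega
  · -- γ + δ₁ ∈ R : it is real of norm t and pairs 5t/2 with δ₁'
    have huu : form (γ + δ₁) (γ + δ₁) = form δ₁ δ₁' := by
      simp only [addL hs, addR hs, hd1, hγγ, hy2, ha]; ring
    have huu0 : form (γ + δ₁) (γ + δ₁) ≠ 0 := by rw [huu]; exact ht
    have hval5 : 2 * form δ₁' (γ + δ₁) =
        ((5 : ℤ) : F) * form (γ + δ₁) (γ + δ₁) := by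
      push_cast
      rw [huu]
      simp only [addR hs, hy1, hy3, hb]
      ring
    have he : form δ₁' (γ + δ₁) = 5 * form δ₁ δ₁' / 2 := by
      simp only [addR hs, hy1, hy3, hb]; ring
    have hn0 : form δ₁' (γ + δ₁) ≠ 0 := by
      rw [he]
      exact div_ne_zero (mul_ne_zero (by norm_num) ht) two_ne_zero
    have := ns_bound hE hp huu0 hd1'R hd1' hval5 hn0
    omega

/-- K2', branch `(γ,δ₁) = 0`. -/
lemma k2_case_zero (hE : IsEARS form R) {δ₁ δ₁' γ : A}
    (hd1R : δ₁ ∈ R) (hd1 : form δ₁ δ₁ = 0)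
    (hd1'R : δ₁' ∈ R) (hd1' : form δ₁' δ₁' = 0)
    (ht : form δ₁ δ₁' ≠ 0)
    (hzR : δ₁ + δ₁' ∈ R)
    (hγR : γ ∈ R) (hγγ : form γ γ = 0)
    (ha : form γ δ₁ = 0)
    (hb : form γ δ₁' = 2 * form δ₁ δ₁') : False := by
  have hs := hE.toIsSymForm
  have hy1 : form δ₁' δ₁ = form δ₁ δ₁' := hs.symm _ _
  have hy2 : form δ₁ γ = form γ δ₁ := hs.symm _ _
  have hy3 : form δ₁' γ = form γ δ₁' := hs.symm _ _
  have hzz : form (δ₁ + δ₁') (δ₁ + δ₁') = 2 * form δ₁ δ₁' := by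
    simp only [addL hs, addR hs, hd1, hd1', hy1]; ring
  have hzz0 : form (δ₁ + δ₁') (δ₁ + δ₁') ≠ 0 := by
    rw [hzz]; exact mul_ne_zero two_ne_zero ht
  have hδ'γ : form δ₁' γ ≠ 0 := by
    rw [hy3, hb]; exact mul_ne_zero two_ne_zero ht
  rcases hE.ns_string δ₁' hd1'R hd1' γ hγR hδ'γ with hm | hp
  case inr =>
    -- γ + δ₁' ∈ R : Cartan of z against it is 3/2, contradiction
    have huu : form (γ + δ₁') (γ + δ₁') = 4 * form δ₁ δ₁' := by
      simp only [addL hs, addR hs, hd1', hγγ, hy3, hb]; ring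
    have huu0 : form (γ + δ₁') (γ + δ₁') ≠ 0 := by
      rw [huu]; exact mul_ne_zero (by norm_num) ht
    obtain ⟨m, hm⟩ := hE.cartan (γ + δ₁') hp huu0 (δ₁ + δ₁') hzR
    have he : form (γ + δ₁') (δ₁ + δ₁') = 3 * form δ₁ δ₁' := by
      simp only [addL hs, addR hs, hd1, hd1', hy1, hy2, hy3, ha, hb]; ring
    rw [he, huu] at hm
    have h0 : ((4 * m - 6 : ℤ) : F) * form δ₁ δ₁' = 0 := by
      push_cast; linear_combination - hm
    have := intz ht h0
    omega
  case inl =>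
    -- γ - δ₁' ∈ R
    have hval1 : 2 * form (γ - δ₁') (δ₁ + δ₁') =
        ((1 : ℤ) : F) * form (δ₁ + δ₁') (δ₁ + δ₁') := by
      push_cast
      simp only [subL hs, addL hs, addR hs, hd1, hd1', hy1, hy2, hy3, ha, hb]
      ring
    have hρm : γ - δ₁' - (δ₁ + δ₁') ∈ R := string_one hE hzR hzz0 hm hval1 le_rfl
    have hρρ : form (γ - δ₁' - (δ₁ + δ₁')) (γ - δ₁' - (δ₁ + δ₁')) =
        -(4 * form δ₁ δ₁') := by
      simp only [subL hs, subR hs, addL hs, addR hs, hd1, hd1', hγγ, hy1, hy2,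
        hy3, ha, hb]
      ring
    have hρρ0 : form (γ - δ₁' - (δ₁ + δ₁')) (γ - δ₁' - (δ₁ + δ₁')) ≠ 0 := by
      rw [hρρ]; exact neg_ne_zero.mpr (mul_ne_zero (by norm_num) ht)
    have hval2 : 2 * form γ (γ - δ₁' - (δ₁ + δ₁')) =
        ((2 : ℤ) : F) * form (γ - δ₁' - (δ₁ + δ₁')) (γ - δ₁' - (δ₁ + δ₁')) := by
      push_cast
      rw [hρρ]
      simp only [subR hs, addR hs, hγγ, ha, hb]
      ring
    have hstep := string_one hE hρm hρρ0 hγR hval2 (by norm_num)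
    have hρ : δ₁ + δ₁' + δ₁' ∈ R := by
      have e : δ₁ + δ₁' + δ₁' = γ - (γ - δ₁' - (δ₁ + δ₁')) := by abel
      rwa [e]
    have hρρ' : form (δ₁ + δ₁' + δ₁') (δ₁ + δ₁' + δ₁') = 4 * form δ₁ δ₁' := by
      simp only [addL hs, addR hs, hd1, hd1', hy1]; ring
    have hρρ0' : form (δ₁ + δ₁' + δ₁') (δ₁ + δ₁' + δ₁') ≠ 0 := by
      rw [hρρ']; exact mul_ne_zero (by norm_num) ht
    have hval1' : 2 * form δ₁ (δ₁ + δ₁' + δ₁') =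
        ((1 : ℤ) : F) * form (δ₁ + δ₁' + δ₁') (δ₁ + δ₁' + δ₁') := by
      push_cast
      rw [hρρ']
      simp only [addR hs, hd1, hy1]
      ring
    have hstep2 := string_one hE hρ hρρ0' hd1R hval1' le_rfl
    have hζ : δ₁' + δ₁' ∈ R := by
      have := hE.neg_mem _ hstep2
      have e : -(δ₁ - (δ₁ + δ₁' + δ₁')) = δ₁' + δ₁' := by abel
      rwa [e] at this
    have hζζ : form (δ₁' + δ₁') (δ₁' + δ₁') = 0 := by
      simp only [addL hs, addR hs, hd1']; ring
    have hvalζ : 2 * form (δ₁' + δ₁') (δ₁ + δ₁') =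
        ((2 : ℤ) : F) * form (δ₁ + δ₁') (δ₁ + δ₁') := by
      push_cast
      rw [hzz]
      simp only [addL hs, addR hs, hd1', hy1]
      ring
    have hstep3 := string_two hE hzR hzz0 hζ hvalζ le_rfl
    have hξ : δ₁ + δ₁ ∈ R := by
      have := hE.neg_mem _ hstep3
      have e : -(δ₁' + δ₁' - (δ₁ + δ₁') - (δ₁ + δ₁')) = δ₁ + δ₁ := by abel
      rwa [e] at this
    have hζξ : form (δ₁' + δ₁') (δ₁ + δ₁) ≠ 0 := by
      have e : form (δ₁' + δ₁') (δ₁ + δ₁) = 4 * form δ₁ δ₁' := by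
        simp only [addL hs, addR hs, hy1]; ring
      rw [e]; exact mul_ne_zero (by norm_num) ht
    rcases hE.ns_string (δ₁' + δ₁') hζ hζζ (δ₁ + δ₁) hξ hζξ with hq | hq
    · -- δ₁ + δ₁ - (δ₁' + δ₁') ∈ R
      have hqq : form (δ₁ + δ₁ - (δ₁' + δ₁')) (δ₁ + δ₁ - (δ₁' + δ₁')) =
          -(8 * form δ₁ δ₁') := by
        simp only [subL hs, subR hs, addL hs, addR hs, hd1, hd1', hy1]; ring
      have hqq0 : form (δ₁ + δ₁ - (δ₁' + δ₁')) (δ₁ + δ₁ - (δ₁' + δ₁')) ≠ 0 := by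
        rw [hqq]; exact neg_ne_zero.mpr (mul_ne_zero (by norm_num) ht)
      obtain ⟨m, hm⟩ := hE.cartan _ hq hqq0 δ₁ hd1R
      have he : form (δ₁ + δ₁ - (δ₁' + δ₁')) δ₁ = -(2 * form δ₁ δ₁') := by
        simp only [subL hs, addL hs, hd1, hy1]; ring
      rw [he, hqq] at hm
      have h0 : ((8 * m - 4 : ℤ) : F) * form δ₁ δ₁' = 0 := by
        push_cast; linear_combination hm
      have := intz ht h0
      omega
    · -- δ₁ + δ₁ + (δ₁' + δ₁') ∈ R
      have hqq : form (δ₁ + δ₁ + (δ₁' + δ₁')) (δ₁ + δ₁ + (δ₁' + δ₁')) =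
          8 * form δ₁ δ₁' := by
        simp only [addL hs, addR hs, hd1, hd1', hy1]; ring
      have hqq0 : form (δ₁ + δ₁ + (δ₁' + δ₁')) (δ₁ + δ₁ + (δ₁' + δ₁')) ≠ 0 := by
        rw [hqq]; exact mul_ne_zero (by norm_num) ht
      obtain ⟨m, hm⟩ := hE.cartan _ hq hqq0 δ₁ hd1R
      have he : form (δ₁ + δ₁ + (δ₁' + δ₁')) δ₁ = 2 * form δ₁ δ₁' := by
        simp only [addL hs, hd1, hy1]; ring
      rw [he, hqq] at hm
      have h0 : ((8 * m - 4 : ℤ) : F) * form δ₁ δ₁' = 0 := by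
        push_cast; linear_combination - hm
      have := intz ht h0
      omega

end Stmt14Aux
namespace Stmt14Aux

variable {F : Type*} [Field F] [CharZero F] {A : Type*} [AddCommGroup A]
  {form : A → A → F} {R : Set A}

/-- K2': if `z = δ₁ + δ₁'` is a "bad" root (both `δ₁ ± δ₁'` are roots, `δ₁, δ₁'`
nonsingular and non-orthogonal), then no nonsingular root `γ` has
`(γ, z) = (z,z)`, i.e. Cartan integer `2`. -/
lemma bad_not_two (hE : IsEARS form R) {δ₁ δ₁' γ : A}
    (hd1R : δ₁ ∈ R) (hd1 : form δ₁ δ₁ = 0)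
    (hd1'R : δ₁' ∈ R) (hd1' : form δ₁' δ₁' = 0)
    (ht : form δ₁ δ₁' ≠ 0)
    (hzR : δ₁ + δ₁' ∈ R) (hbR : δ₁ - δ₁' ∈ R)
    (hγR : γ ∈ R) (hγγ : form γ γ = 0)
    (hsum : form γ δ₁ + form γ δ₁' = 2 * form δ₁ δ₁') : False := by
  have hs := hE.toIsSymForm
  have hy1 : form δ₁' δ₁ = form δ₁ δ₁' := hs.symm _ _
  have ht' : form δ₁' δ₁ ≠ 0 := by rwa [hy1]
  have hzR' : δ₁' + δ₁ ∈ R := by rwa [add_comm]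
  have hbb : form (δ₁ - δ₁') (δ₁ - δ₁') = -(2 * form δ₁ δ₁') := by
    simp only [subL hs, subR hs, hd1, hd1', hy1]; ring
  have hbb0 : form (δ₁ - δ₁') (δ₁ - δ₁') ≠ 0 := by
    rw [hbb]; exact neg_ne_zero.mpr (mul_ne_zero two_ne_zero ht)
  have eγb : form γ (δ₁ - δ₁') = form γ δ₁ - form γ δ₁' := subR hs γ δ₁ δ₁'
  by_cases h0 : form γ δ₁ = form γ δ₁'
  · have ha : form γ δ₁ = form δ₁ δ₁' := by linear_combination hsum / 2 + h0 / 2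
    have hb : form γ δ₁' = form δ₁ δ₁' := by linear_combination hsum / 2 - h0 / 2
    exact k2_case_t hE hd1R hd1 hd1'R hd1' ht hzR hγR hγγ ha hb
  · obtain ⟨c, hc⟩ := hE.cartan (δ₁ - δ₁') hbR hbb0 γ hγR
    have hval : 2 * form γ (δ₁ - δ₁') =
        (c : F) * form (δ₁ - δ₁') (δ₁ - δ₁') := by
      rw [hs.symm γ (δ₁ - δ₁')]; exact hc
    have hne : form γ (δ₁ - δ₁') ≠ 0 := by
      rw [eγb]; exact sub_ne_zero.mpr h0
    have hval' : 2 * (form γ δ₁ - form γ δ₁') =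
        (c : F) * (-(2 * form δ₁ δ₁')) := by
      rw [← eγb, ← hbb]; exact hval
    have hcb := ns_bound hE hbR hbb0 hγR hγγ hval hne
    rcases hcb with rfl | rfl | rfl | rfl
    · have h2a : 2 * form γ δ₁ = form δ₁ δ₁' := by
        push_cast at hval'
        linear_combination hval' / 2 + hsum
      exact k2_case_half hE hd1R hd1 hd1'R hd1' ht hzR hγR hγγ h2a hsum
    · have ha : form γ δ₁ = 0 := by
        push_cast at hval'
        linear_combination hval' / 4 + hsum / 2
      have hb : form γ δ₁' = 2 * form δ₁ δ₁' := by
        push_cast at hval'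
        linear_combination hsum - hval' / 4 - hsum / 2
      exact k2_case_zero hE hd1R hd1 hd1'R hd1' ht hzR hγR hγγ ha hb
    · have h2a : 2 * form γ δ₁' = form δ₁' δ₁ := by
        rw [hy1]
        push_cast at hval'
        linear_combination hsum - hval' / 2
      have hsum' : form γ δ₁' + form γ δ₁ = 2 * form δ₁' δ₁ := by
        rw [hy1]; linear_combination hsum
      exact k2_case_half hE hd1'R hd1' hd1R hd1 ht' hzR' hγR hγγ h2a hsum'
    · have ha : form γ δ₁' = 0 := by
        push_cast at hval'
        linear_combination hsum / 2 - hval' / 4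
      have hb : form γ δ₁ = 2 * form δ₁' δ₁ := by
        rw [hy1]
        push_cast at hval'
        linear_combination hsum / 2 + hval' / 4
      exact k2_case_zero hE hd1'R hd1' hd1R hd1 ht' hzR' hγR hγγ ha hb

end Stmt14Aux
namespace Stmt14Aux

variable {F : Type*} [Field F] [CharZero F] {A : Type*} [AddCommGroup A]
  {form : A → A → F} {R : Set A}

/-- P, branch `(α,δ₁) = 0`. -/
lemma p_case_zero (hL : IsLFRSS form R) {δ₁ δ₁' α : A}
    (hd1R : δ₁ ∈ R) (hd1 : form δ₁ δ₁ = 0)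
    (hd1'R : δ₁' ∈ R) (hd1' : form δ₁' δ₁' = 0)
    (ht : form δ₁ δ₁' ≠ 0)
    (hzR : δ₁ + δ₁' ∈ R) (hbR : δ₁ - δ₁' ∈ R)
    (hαR : α ∈ R) (hαα : form α α = 0)
    (ha : form α δ₁ = 0) (hb : form α δ₁' = form δ₁ δ₁') :
    α + α - (δ₁ + δ₁') ∈ R := by
  have hE := hL.1
  have hs := hE.toIsSymForm
  have hy1 : form δ₁' δ₁ = form δ₁ δ₁' := hs.symm _ _
  have hy2 : form δ₁ α = form α δ₁ := hs.symm _ _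
  have hy3 : form δ₁' α = form α δ₁' := hs.symm _ _
  have hzz : form (δ₁ + δ₁') (δ₁ + δ₁') = 2 * form δ₁ δ₁' := by
    simp only [addL hs, addR hs, hd1, hd1', hy1]; ring
  have hzz0 : form (δ₁ + δ₁') (δ₁ + δ₁') ≠ 0 := by
    rw [hzz]; exact mul_ne_zero two_ne_zero ht
  have hbb : form (δ₁ - δ₁') (δ₁ - δ₁') = -(2 * form δ₁ δ₁') := by
    simp only [subL hs, subR hs, hd1, hd1', hy1]; ring
  have hbb0 : form (δ₁ - δ₁') (δ₁ - δ₁') ≠ 0 := by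
    rw [hbb]; exact neg_ne_zero.mpr (mul_ne_zero two_ne_zero ht)
  have hδ'α : form δ₁' α ≠ 0 := by rw [hy3, hb]; exact ht
  rcases hE.ns_string δ₁' hd1'R hd1' α hαR hδ'α with hv | hu
  · -- (i) : v = α - δ₁' ∈ R
    have hvv : form (α - δ₁') (α - δ₁') = -(2 * form δ₁ δ₁') := by
      simp only [subL hs, subR hs, hαα, hd1', hy3, hb]; ring
    have hvv0 : form (α - δ₁') (α - δ₁') ≠ 0 := by
      rw [hvv]; exact neg_ne_zero.mpr (mul_ne_zero two_ne_zero ht)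
    have hval2 : 2 * form (α - δ₁') (δ₁ - δ₁') =
        ((2 : ℤ) : F) * form (δ₁ - δ₁') (δ₁ - δ₁') := by
      push_cast
      rw [hbb]
      simp only [subL hs, subR hs, hd1, hd1', hy1, hy2, hy3, ha, hb]
      ring
    have hπ : α - δ₁' - (δ₁ - δ₁') ∈ R := string_one hE hbR hbb0 hv hval2 (by norm_num)
    have hperp : form (α - δ₁' - (δ₁ - δ₁')) (α - δ₁') = 0 := by
      simp only [subL hs, subR hs, hαα, hd1, hd1', hy1, hy2, hy3, ha, hb]; ring
    have hmem : α - δ₁' - (δ₁ - δ₁') - (α - δ₁') ∈ R := by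
      have := hE.neg_mem _ hbR
      have e : α - δ₁' - (δ₁ - δ₁') - (α - δ₁') = -(δ₁ - δ₁') := by abel
      rwa [e]
    have := string_perp hE hv hvv0 hπ hperp hmem
    have e : α - δ₁' - (δ₁ - δ₁') + (α - δ₁') = α + α - (δ₁ + δ₁') := by abel
    rwa [e] at this
  · -- (ii) : u = α + δ₁' ∈ R ; derive `α = δ₁` via the triple ladder
    have huu : form (α + δ₁') (α + δ₁') = 2 * form δ₁ δ₁' := by
      simp only [addL hs, addR hs, hαα, hd1', hy3, hb]; ring
    have huu0 : form (α + δ₁') (α + δ₁') ≠ 0 := by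
      rw [huu]; exact mul_ne_zero two_ne_zero ht
    have hvalu : 2 * form (α + δ₁') (δ₁ + δ₁') =
        ((2 : ℤ) : F) * form (δ₁ + δ₁') (δ₁ + δ₁') := by
      push_cast
      rw [hzz]
      simp only [addL hs, addR hs, hd1, hd1', hy1, hy2, hy3, ha, hb]
      ring
    have hπ : α + δ₁' - (δ₁ + δ₁') ∈ R := string_one hE hzR hzz0 hu hvalu (by norm_num)
    have hσ : α + δ₁' - (δ₁ + δ₁') - (δ₁ + δ₁') ∈ R :=
      string_two hE hzR hzz0 hu hvalu le_rfl
    have hσσ : form (α + δ₁' - (δ₁ + δ₁') - (δ₁ + δ₁'))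
        (α + δ₁' - (δ₁ + δ₁') - (δ₁ + δ₁')) = 2 * form δ₁ δ₁' := by
      simp only [subL hs, subR hs, addL hs, addR hs, hαα, hd1, hd1', hy1, hy2,
        hy3, ha, hb]
      ring
    have hvalσ : 2 * form (α + δ₁' - (δ₁ + δ₁') - (δ₁ + δ₁')) (α + δ₁') =
        ((-2 : ℤ) : F) * form (α + δ₁') (α + δ₁') := by
      push_cast
      rw [huu]
      simp only [subL hs, addL hs, addR hs, hαα, hd1, hd1', hy1, hy2, hy3, ha, hb]
      ring
    have hτ : α + δ₁' - (δ₁ + δ₁') - (δ₁ + δ₁') + (α + δ₁') + (α + δ₁') ∈ R :=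
      string_negtwo hE hu huu0 hσ hvalσ le_rfl
    have hvalτ : 2 * form (α + δ₁' - (δ₁ + δ₁') - (δ₁ + δ₁') + (α + δ₁') + (α + δ₁'))
        (δ₁ + δ₁') = ((2 : ℤ) : F) * form (δ₁ + δ₁') (δ₁ + δ₁') := by
      push_cast
      rw [hzz]
      simp only [subL hs, addL hs, addR hs, hαα, hd1, hd1', hy1, hy2, hy3, ha, hb]
      ring
    have h3π' := string_one hE hzR hzz0 hτ hvalτ (by norm_num)
    have h3π : (α - δ₁) + (α - δ₁) + (α - δ₁) ∈ R := by
      have e : (α - δ₁) + (α - δ₁) + (α - δ₁) =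
          α + δ₁' - (δ₁ + δ₁') - (δ₁ + δ₁') + (α + δ₁') + (α + δ₁') - (δ₁ + δ₁') := by
        abel
      rwa [e]
    have hπR : α - δ₁ ∈ R := by
      have e : α - δ₁ = α + δ₁' - (δ₁ + δ₁') := by abel
      rwa [e]
    have hππ : form (α - δ₁) (α - δ₁) = 0 := by
      simp only [subL hs, subR hs, hαα, hd1, hy2, ha]; ring
    have hαδ : α = δ₁ := sub_eq_zero.mp (triple_isotropic hL hπR hππ h3π)
    rw [hαδ]
    have e : δ₁ + δ₁ - (δ₁ + δ₁') = δ₁ - δ₁' := by abel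
    rw [e]
    exact hbR

/-- P, branch `2(α,δ₁) = t`. -/
lemma p_case_half (hE : IsEARS form R) {δ₁ δ₁' α : A}
    (hd1R : δ₁ ∈ R) (hd1 : form δ₁ δ₁ = 0)
    (hd1'R : δ₁' ∈ R) (hd1' : form δ₁' δ₁' = 0)
    (ht : form δ₁ δ₁' ≠ 0)
    (hzR : δ₁ + δ₁' ∈ R) (hbR : δ₁ - δ₁' ∈ R)
    (hαR : α ∈ R) (hαα : form α α = 0)
    (h2a : 2 * form α δ₁ = form δ₁ δ₁')
    (hsum : form α δ₁ + form α δ₁' = form δ₁ δ₁') :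
    α + α - (δ₁ + δ₁') ∈ R := by
  have hs := hE.toIsSymForm
  have hy1 : form δ₁' δ₁ = form δ₁ δ₁' := hs.symm _ _
  have hy2 : form δ₁ α = form α δ₁ := hs.symm _ _
  have hy3 : form δ₁' α = form α δ₁' := hs.symm _ _
  have ha : form α δ₁ = form δ₁ δ₁' / 2 := by field_simp; linear_combination h2a
  have hb : form α δ₁' = form δ₁ δ₁' / 2 := by
    field_simp; linear_combination 2 * hsum - h2a
  have hδα : form δ₁ α ≠ 0 := by
    rw [hy2, ha]; exact div_ne_zero ht two_ne_zero
  have hδ'α : form δ₁' α ≠ 0 := by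
    rw [hy3, hb]; exact div_ne_zero ht two_ne_zero
  rcases hE.ns_string δ₁ hd1R hd1 α hαR hδα with hm1 | hp1
  · rcases hE.ns_string δ₁' hd1'R hd1' α hαR hδ'α with hm2 | hp2
    · -- both α - δ₁, α - δ₁' ∈ R : perp trick
      have hm2m : form (α - δ₁') (α - δ₁') = -(form δ₁ δ₁') := by
        simp only [subL hs, subR hs, hαα, hd1', hy3, hb]; ring
      have hm2m0 : form (α - δ₁') (α - δ₁') ≠ 0 := by
        rw [hm2m]; exact neg_ne_zero.mpr ht
      have hperp : form (α - δ₁) (α - δ₁') = 0 := by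
        simp only [subL hs, subR hs, hαα, hd1, hd1', hy1, hy2, hy3, ha, hb]; ring
      have hmem : α - δ₁ - (α - δ₁') ∈ R := by
        have := hE.neg_mem _ hbR
        have e : α - δ₁ - (α - δ₁') = -(δ₁ - δ₁') := by abel
        rwa [e]
      have := string_perp hE hm2 hm2m0 hm1 hperp hmem
      have e : α - δ₁ + (α - δ₁') = α + α - (δ₁ + δ₁') := by abel
      rwa [e] at this
    · -- α + δ₁' ∈ R : Cartan 3 against δ₁, impossible
      exfalso
      have hqq : form (α + δ₁') (α + δ₁') = form δ₁ δ₁' := by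
        simp only [addL hs, addR hs, hαα, hd1', hy3, hb]; ring
      have hqq0 : form (α + δ₁') (α + δ₁') ≠ 0 := by rw [hqq]; exact ht
      have hval3 : 2 * form δ₁ (α + δ₁') =
          ((3 : ℤ) : F) * form (α + δ₁') (α + δ₁') := by
        push_cast
        rw [hqq]
        simp only [addR hs, hy2, ha, hd1]
        ring
      have hn0 : form δ₁ (α + δ₁') ≠ 0 := by
        have e : form δ₁ (α + δ₁') = 3 * form δ₁ δ₁' / 2 := by
          simp only [addR hs, hy2, ha, hd1]; ring
        rw [e]
        exact div_ne_zero (mul_ne_zero three_ne_zero ht) two_ne_zero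
      have := ns_bound hE hp2 hqq0 hd1R hd1 hval3 hn0
      omega
  · -- α + δ₁ ∈ R : Cartan 3 against δ₁', impossible
    exfalso
    have hqq : form (α + δ₁) (α + δ₁) = form δ₁ δ₁' := by
      simp only [addL hs, addR hs, hαα, hd1, hy2, ha]; ring
    have hqq0 : form (α + δ₁) (α + δ₁) ≠ 0 := by rw [hqq]; exact ht
    have hval3 : 2 * form δ₁' (α + δ₁) =
        ((3 : ℤ) : F) * form (α + δ₁) (α + δ₁) := by
      push_cast
      rw [hqq]
      simp only [addR hs, hy1, hy3, hb]
      ring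
    have hn0 : form δ₁' (α + δ₁) ≠ 0 := by
      have e : form δ₁' (α + δ₁) = 3 * form δ₁ δ₁' / 2 := by
        simp only [addR hs, hy1, hy3, hb]; ring
      rw [e]
      exact div_ne_zero (mul_ne_zero three_ne_zero ht) two_ne_zero
    have := ns_bound hE hp1 hqq0 hd1'R hd1' hval3 hn0
    omega

/-- P, branch `2(α,δ₁) = -t`. -/
lemma p_case_neghalf (hE : IsEARS form R) {δ₁ δ₁' α : A}
    (hd1R : δ₁ ∈ R) (hd1 : form δ₁ δ₁ = 0)
    (hd1'R : δ₁' ∈ R) (hd1' : form δ₁' δ₁' = 0)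
    (ht : form δ₁ δ₁' ≠ 0)
    (hzR : δ₁ + δ₁' ∈ R) (hbR : δ₁ - δ₁' ∈ R)
    (hαR : α ∈ R) (hαα : form α α = 0)
    (h2a : 2 * form α δ₁ = -(form δ₁ δ₁'))
    (hsum : form α δ₁ + form α δ₁' = form δ₁ δ₁') :
    α + α - (δ₁ + δ₁') ∈ R := by
  have hs := hE.toIsSymForm
  have hy1 : form δ₁' δ₁ = form δ₁ δ₁' := hs.symm _ _
  have hy2 : form δ₁ α = form α δ₁ := hs.symm _ _
  have hy3 : form δ₁' α = form α δ₁' := hs.symm _ _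
  have ha : form α δ₁ = -(form δ₁ δ₁' / 2) := by
    field_simp; linear_combination h2a
  have hb : form α δ₁' = 3 * form δ₁ δ₁' / 2 := by
    field_simp; linear_combination 2 * hsum - h2a
  have hδ'α : form δ₁' α ≠ 0 := by
    rw [hy3, hb]
    exact div_ne_zero (mul_ne_zero three_ne_zero ht) two_ne_zero
  rcases hE.ns_string δ₁' hd1'R hd1' α hαR hδ'α with hm | hp
  · -- y' = α - δ₁' ∈ R, real of norm -3t; walk β₁ down its string twice
    have hyy : form (α - δ₁') (α - δ₁') = -(3 * form δ₁ δ₁') := by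
      simp only [subL hs, subR hs, hαα, hd1', hy3, hb]; ring
    have hyy0 : form (α - δ₁') (α - δ₁') ≠ 0 := by
      rw [hyy]; exact neg_ne_zero.mpr (mul_ne_zero three_ne_zero ht)
    have hval2 : 2 * form (δ₁ - δ₁') (α - δ₁') =
        ((2 : ℤ) : F) * form (α - δ₁') (α - δ₁') := by
      push_cast
      rw [hyy]
      simp only [subL hs, subR hs, hd1, hd1', hy1, hy2, hy3, ha, hb]
      ring
    have hg' : δ₁ - δ₁' - (α - δ₁') - (α - δ₁') ∈ R :=
      string_two hE hm hyy0 hbR hval2 le_rfl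
    have := hE.neg_mem _ hg'
    have e : -(δ₁ - δ₁' - (α - δ₁') - (α - δ₁')) = α + α - (δ₁ + δ₁') := by abel
    rwa [e] at this
  · -- y = α + δ₁' ∈ R : Cartan of δ₁ against it is 1/3, impossible
    exfalso
    have hyy : form (α + δ₁') (α + δ₁') = 3 * form δ₁ δ₁' := by
      simp only [addL hs, addR hs, hαα, hd1', hy3, hb]; ring
    have hyy0 : form (α + δ₁') (α + δ₁') ≠ 0 := by
      rw [hyy]; exact mul_ne_zero three_ne_zero ht
    obtain ⟨m, hmq⟩ := hE.cartan (α + δ₁') hp hyy0 δ₁ hd1R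
    have he : form (α + δ₁') δ₁ = form δ₁ δ₁' / 2 := by
      simp only [addL hs, hy1, hy2, ha]; ring
    rw [he, hyy] at hmq
    have h0 : ((6 * m - 2 : ℤ) : F) * form δ₁ δ₁' = 0 := by
      push_cast; linear_combination -2 * hmq
    have := intz ht h0
    omega

end Stmt14Aux
namespace Stmt14Aux

variable {F : Type*} [Field F] [CharZero F] {A : Type*} [AddCommGroup A]
  {form : A → A → F} {R : Set A}

/-- P: if `z = δ₁ + δ₁'` is a "bad" root and `α` is nonsingular with
`2(α,z) = (z,z)`, then `2α - z ∈ R`. -/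
lemma bad_pair_closed (hL : IsLFRSS form R) {δ₁ δ₁' α : A}
    (hd1R : δ₁ ∈ R) (hd1 : form δ₁ δ₁ = 0)
    (hd1'R : δ₁' ∈ R) (hd1' : form δ₁' δ₁' = 0)
    (ht : form δ₁ δ₁' ≠ 0)
    (hzR : δ₁ + δ₁' ∈ R) (hbR : δ₁ - δ₁' ∈ R)
    (hαR : α ∈ R) (hαα : form α α = 0)
    (hsum : form α δ₁ + form α δ₁' = form δ₁ δ₁') :
    α + α - (δ₁ + δ₁') ∈ R := by
  have hE := hL.1
  have hs := hE.toIsSymForm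
  have hy1 : form δ₁' δ₁ = form δ₁ δ₁' := hs.symm _ _
  have ht' : form δ₁' δ₁ ≠ 0 := by rwa [hy1]
  have hzR' : δ₁' + δ₁ ∈ R := by rwa [add_comm]
  have hbR' : δ₁' - δ₁ ∈ R := by
    have := hE.neg_mem _ hbR; rwa [neg_sub] at this
  have hcomm : α + α - (δ₁' + δ₁) = α + α - (δ₁ + δ₁') := by abel
  have hbb : form (δ₁ - δ₁') (δ₁ - δ₁') = -(2 * form δ₁ δ₁') := by
    simp only [subL hs, subR hs, hd1, hd1', hy1]; ring
  have hbb0 : form (δ₁ - δ₁') (δ₁ - δ₁') ≠ 0 := by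
    rw [hbb]; exact neg_ne_zero.mpr (mul_ne_zero two_ne_zero ht)
  have eαb : form α (δ₁ - δ₁') = form α δ₁ - form α δ₁' := subR hs α δ₁ δ₁'
  by_cases h0 : form α δ₁ = form α δ₁'
  · have h2a : 2 * form α δ₁ = form δ₁ δ₁' := by
      linear_combination hsum + h0
    exact p_case_half hE hd1R hd1 hd1'R hd1' ht hzR hbR hαR hαα h2a hsum
  · obtain ⟨c, hc⟩ := hE.cartan (δ₁ - δ₁') hbR hbb0 α hαR
    have hval : 2 * form α (δ₁ - δ₁') =
        (c : F) * form (δ₁ - δ₁') (δ₁ - δ₁') := by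
      rw [hs.symm α (δ₁ - δ₁')]; exact hc
    have hne : form α (δ₁ - δ₁') ≠ 0 := by
      rw [eαb]; exact sub_ne_zero.mpr h0
    have hval' : 2 * (form α δ₁ - form α δ₁') =
        (c : F) * (-(2 * form δ₁ δ₁')) := by
      rw [← eαb, ← hbb]; exact hval
    have hcb := ns_bound hE hbR hbb0 hαR hαα hval hne
    rcases hcb with rfl | rfl | rfl | rfl
    · -- c = 1 : (α,δ₁) = 0
      have ha : form α δ₁ = 0 := by
        push_cast at hval'
        linear_combination hval' / 4 + hsum / 2
      have hb : form α δ₁' = form δ₁ δ₁' := by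
        push_cast at hval'
        linear_combination hsum / 2 - hval' / 4
      exact p_case_zero hL hd1R hd1 hd1'R hd1' ht hzR hbR hαR hαα ha hb
    · -- c = 2 : 2(α,δ₁) = -t
      have h2a : 2 * form α δ₁ = -(form δ₁ δ₁') := by
        push_cast at hval'
        linear_combination hval' / 2 + hsum
      exact p_case_neghalf hE hd1R hd1 hd1'R hd1' ht hzR hbR hαR hαα h2a hsum
    · -- c = -1 : (α,δ₁') = 0, swap
      have ha : form α δ₁' = 0 := by
        push_cast at hval'
        linear_combination hsum / 2 - hval' / 4
      have hb : form α δ₁ = form δ₁' δ₁ := by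
        rw [hy1]
        push_cast at hval'
        linear_combination hsum / 2 + hval' / 4
      have hsum' : form α δ₁' + form α δ₁ = form δ₁' δ₁ := by
        rw [hy1]; linear_combination hsum
      have := p_case_zero hL hd1'R hd1' hd1R hd1 ht' hzR' hbR' hαR hαα ha hb
      rwa [hcomm] at this
    · -- c = -2 : 2(α,δ₁') = -t, swap
      have h2a : 2 * form α δ₁' = -(form δ₁' δ₁) := by
        rw [hy1]
        push_cast at hval'
        linear_combination hsum - hval' / 2
      have hsum' : form α δ₁' + form α δ₁ = form δ₁' δ₁ := by
        rw [hy1]; linear_combination hsum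
      have := p_case_neghalf hE hd1'R hd1' hd1R hd1 ht' hzR' hbR' hαR hαα h2a hsum'
      rwa [hcomm] at this

end Stmt14Aux
namespace Stmt14Aux

variable {F : Type*} [Field F] [CharZero F] {A : Type*} [AddCommGroup A]
  {form : A → A → F} {R : Set A}

/-- A "bad" element: a sum of two non-orthogonal nonsingular roots whose
difference is also a root. -/
def BadRoot (form : A → A → F) (R : Set A) (z : A) : Prop :=
  ∃ δ δ', δ ∈ R ∧ form δ δ = 0 ∧ δ' ∈ R ∧ form δ' δ' = 0 ∧
    form δ δ' ≠ 0 ∧ δ - δ' ∈ R ∧ z = δ + δ'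

lemma badRoot_norm (hs : IsSymForm form) {z : A} (hb : BadRoot form R z) :
    form z z ≠ 0 ∧ ∃ t : F, form z z = 2 * t ∧ t ≠ 0 := by
  obtain ⟨δ, δ', hδR, hδ, hδ'R, hδ', ht, hmR, rfl⟩ := hb
  have e : form (δ + δ') (δ + δ') = 2 * form δ δ' := by
    simp only [addL hs, addR hs, hδ, hδ', hs.symm δ' δ]; ring
  exact ⟨by rw [e]; exact mul_ne_zero two_ne_zero ht, form δ δ', e, ht⟩

lemma badRoot_neg (hE : IsEARS form R) {z : A} (hb : BadRoot form R z) :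
    BadRoot form R (-z) := by
  have hs := hE.toIsSymForm
  obtain ⟨δ, δ', hδR, hδ, hδ'R, hδ', ht, hmR, rfl⟩ := hb
  refine ⟨-δ, -δ', hE.neg_mem _ hδR, ?_, hE.neg_mem _ hδ'R, ?_, ?_, ?_, by abel⟩
  · rw [negL hs, negR hs, hδ]; ring
  · rw [negL hs, negR hs, hδ']; ring
  · rw [negL hs, negR hs]
    simpa using ht
  · have := hE.neg_mem _ hmR
    have e : -(δ - δ') = -δ - -δ' := by abel
    rwa [e] at this

/-- Reflections (in real roots) preserve `R` (membership form). -/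
lemma refl_mem (hE : IsEARS form R) {σ β : A} (hσR : σ ∈ R)
    (hσσ : form σ σ ≠ 0) (hβ : β ∈ R) {k : ℤ}
    (hval : 2 * form β σ = (k : F) * form σ σ) : β - k • σ ∈ R :=
  string_interval hE hσR hσσ hβ hval k (by omega)

lemma refl_norm (hs : IsSymForm form) {σ β : A} {k : ℤ}
    (hval : 2 * form β σ = (k : F) * form σ σ) :
    form (β - k • σ) (β - k • σ) = form β β := by
  simp only [subL hs, subR hs, zsmulL hs, zsmulR hs, hs.symm σ β]
  linear_combination (-(k : F)) * hval

lemma refl_pair (hs : IsSymForm form) {σ β β' : A} {k k' : ℤ}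
    (hval : 2 * form β σ = (k : F) * form σ σ)
    (hval' : 2 * form β' σ = (k' : F) * form σ σ) :
    form (β - k • σ) (β' - k' • σ) = form β β' := by
  simp only [subL hs, subR hs, zsmulL hs, zsmulR hs, hs.symm σ β,
    hs.symm σ β', hs.symm β' β]
  linear_combination (-(k' : F) / 2) * hval + (-(k : F) / 2) * hval'

/-- `BadRoot` is stable under reflections in real roots. -/
lemma badRoot_reflect (hE : IsEARS form R) {σ z : A} (hσR : σ ∈ R)
    (hσσ : form σ σ ≠ 0) {k : ℤ}
    (hval : 2 * form z σ = (k : F) * form σ σ)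
    (hb : BadRoot form R z) : BadRoot form R (z - k • σ) := by
  have hs := hE.toIsSymForm
  obtain ⟨δ, δ', hδR, hδ, hδ'R, hδ', ht, hmR, rfl⟩ := hb
  obtain ⟨k₁, hk₁⟩ := hE.cartan σ hσR hσσ δ hδR
  obtain ⟨k₂, hk₂⟩ := hE.cartan σ hσR hσσ δ' hδ'R
  have hv₁ : 2 * form δ σ = (k₁ : F) * form σ σ := by
    rw [hs.symm δ σ]; exact hk₁
  have hv₂ : 2 * form δ' σ = (k₂ : F) * form σ σ := by
    rw [hs.symm δ' σ]; exact hk₂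
  have hsum : 2 * form (δ + δ') σ = ((k₁ + k₂ : ℤ) : F) * form σ σ := by
    push_cast
    rw [addL hs]
    linear_combination hv₁ + hv₂
  have hkk : k = k₁ + k₂ := by
    have : ((k : ℤ) : F) = ((k₁ + k₂ : ℤ) : F) :=
      mul_right_cancel₀ hσσ (by linear_combination hsum - hval)
    exact_mod_cast this
  refine ⟨δ - k₁ • σ, δ' - k₂ • σ, refl_mem hE hσR hσσ hδR hv₁, ?_,
    refl_mem hE hσR hσσ hδ'R hv₂, ?_, ?_, ?_, ?_⟩
  · rw [refl_norm hs hv₁]; exact hδ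
  · rw [refl_norm hs hv₂]; exact hδ'
  · rw [refl_pair hs hv₁ hv₂]; exact ht
  · have hvm : 2 * form (δ - δ') σ = ((k₁ - k₂ : ℤ) : F) * form σ σ := by
      push_cast
      rw [subL hs]
      linear_combination hv₁ - hv₂
    have := refl_mem hE hσR hσσ hmR hvm
    have e : δ - δ' - (k₁ - k₂) • σ = δ - k₁ • σ - (δ' - k₂ • σ) := by
      rw [sub_zsmul]; abel
    rwa [e] at this
  · rw [hkk, add_zsmul]; abel

/-- wrapper for K2' in terms of `BadRoot`. -/
lemma badRoot_not_two (hE : IsEARS form R) {z γ : A}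
    (hb : BadRoot form R z) (hzR : z ∈ R) (hγR : γ ∈ R) (hγγ : form γ γ = 0)
    (habs : form γ z = form z z ∨ form γ z = -(form z z)) : False := by
  have hs := hE.toIsSymForm
  obtain ⟨δ, δ', hδR, hδ, hδ'R, hδ', ht, hmR, rfl⟩ := hb
  have hzz : form (δ + δ') (δ + δ') = 2 * form δ δ' := by
    simp only [addL hs, addR hs, hδ, hδ', hs.symm δ' δ]; ring
  rcases habs with hpos | hneg
  · refine bad_not_two hE hδR hδ hδ'R hδ' ht hzR hmR hγR hγγ ?_
    have e : form γ (δ + δ') = form γ δ + form γ δ' := addR hs γ δ δ'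
    rw [e, hzz] at hpos
    exact hpos
  · have hγ'R : -γ ∈ R := hE.neg_mem _ hγR
    have hγ'γ' : form (-γ) (-γ) = 0 := by rw [negL hs, negR hs, hγγ]; ring
    refine bad_not_two hE hδR hδ hδ'R hδ' ht hzR hmR hγ'R hγ'γ' ?_
    have e1 : form (-γ) δ = -(form γ δ) := negL hs γ δ
    have e2 : form (-γ) δ' = -(form γ δ') := negL hs γ δ'
    rw [e1, e2]
    have e : form γ (δ + δ') = form γ δ + form γ δ' := addR hs γ δ δ'
    rw [e, hzz] at hneg
    linear_combination - hneg

/-- wrapper for P in terms of `BadRoot`. -/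
lemma badRoot_pair (hL : IsLFRSS form R) {z α : A}
    (hb : BadRoot form R z) (hzR : z ∈ R) (hαR : α ∈ R) (hαα : form α α = 0)
    (hhalf : 2 * form α z = form z z) : α + α - z ∈ R := by
  have hs := hL.1.toIsSymForm
  obtain ⟨δ, δ', hδR, hδ, hδ'R, hδ', ht, hmR, rfl⟩ := hb
  have hzz : form (δ + δ') (δ + δ') = 2 * form δ δ' := by
    simp only [addL hs, addR hs, hδ, hδ', hs.symm δ' δ]; ring
  refine bad_pair_closed hL hδR hδ hδ'R hδ' ht hzR hmR hαR hαα ?_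
  · have e : form α (δ + δ') = form α δ + form α δ' := addR hs α δ δ'
    rw [e, hzz] at hhalf
    linear_combination hhalf / 2

end Stmt14Aux
namespace Stmt14Aux

lemma exists_signs (F : Type*) [Field F] [CharZero F] :
    ∃ V : Set F, ∀ a : F, a ≠ 0 → ((a ∈ V) ↔ ¬(-a ∈ V)) := by
  refine ⟨{a | WellOrderingRel a (-a)}, fun a ha => ?_⟩
  have hne : a ≠ -a := by
    intro h
    apply ha
    have h2 : (2 : F) * a = 0 := by linear_combination h
    rcases mul_eq_zero.mp h2 with h' | h'
    · exact absurd h' two_ne_zero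
    · exact h'
  simp only [Set.mem_setOf_eq, neg_neg]
  constructor
  · intro hmem hmem'
    exact asymm hmem hmem'
  · intro hnm
    rcases trichotomous_of WellOrderingRel a (-a) with h | h | h
    · exact h
    · exact absurd h hne
    · exact absurd h hnm

end Stmt14Aux

theorem stmt14 {F : Type*} [Field F] [CharZero F] {A : Type*} [AddCommGroup A]
    (form : A → A → F) (R : Set A) (h : IsLFRSS form R) :
    ∃ S : Set A, IsSubSupersystem form R S ∧
      nsRoots form S = nsRoots form R ∧
      AddSubgroup.closure S = AddSubgroup.closure R ∧
      ∀ α ∈ S, ∀ δ ∈ nsRoots form S, form α δ ≠ 0 →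
        ∃! r : ℤ, (r = 1 ∨ r = -1) ∧ α + r • δ ∈ S := by
  classical
  obtain ⟨hE, hnd⟩ := h
  have hL : IsLFRSS form R := ⟨hE, hnd⟩
  have hs := hE.toIsSymForm
  obtain ⟨V, hV⟩ := Stmt14Aux.exists_signs F
  set S : Set A :=
    {x | x ∈ R ∧ ¬ (Stmt14Aux.BadRoot form R x ∧ form x x ∈ V)} with hSdef
  have hSsub : S ⊆ R := fun x hx => hx.1
  have hnsS : ∀ x ∈ R, form x x = 0 → x ∈ S := by
    intro x hxR hxx
    refine ⟨hxR, ?_⟩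
    rintro ⟨hbad, -⟩
    exact (Stmt14Aux.badRoot_norm hs hbad).1 hxx
  have hSneg : ∀ x, x ∈ S → -x ∈ S := by
    intro x hx
    refine ⟨hE.neg_mem _ hx.1, ?_⟩
    rintro ⟨hbad, hinV⟩
    have hbad' := Stmt14Aux.badRoot_neg hE hbad
    rw [neg_neg] at hbad'
    have e : form (-x) (-x) = form x x := by
      rw [Stmt14Aux.negL hs, Stmt14Aux.negR hs]; ring
    exact hx.2 ⟨hbad', by rwa [e] at hinV⟩
  have hclos : AddSubgroup.closure S = AddSubgroup.closure R := by
    apply le_antisymm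
    · exact AddSubgroup.closure_mono hSsub
    · rw [AddSubgroup.closure_le]
      intro x hxR
      by_cases hxS : x ∈ S
      · exact AddSubgroup.subset_closure hxS
      · have hbad : Stmt14Aux.BadRoot form R x ∧ form x x ∈ V := by
          by_contra hc
          exact hxS ⟨hxR, hc⟩
        obtain ⟨⟨δ, δ', hδR, hδ, hδ'R, hδ', ht, hmR, rfl⟩, -⟩ := hbad
        exact add_mem (AddSubgroup.subset_closure (hnsS δ hδR hδ))
          (AddSubgroup.subset_closure (hnsS δ' hδ'R hδ'))
  have hcl_top : AddSubgroup.closure S = ⊤ := by rw [hclos, hE.closure_eq_top]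
  -- the neighbor of a real root of S in the direction of a nonsingular root
  have hreal_nb : ∀ x γ : A, x ∈ R → form x x ≠ 0 → γ ∈ R → form γ γ = 0 →
      form γ x ≠ 0 → ∀ k : ℤ, 2 * form γ x = (k : F) * form x x →
      ((γ - x ∈ S ∧ γ + x ∉ R) ∨ (γ + x ∈ S ∧ γ - x ∉ R)) := by
    intro x γ hxR hxx hγR hγγ hn0 k hval
    rcases Stmt14Aux.ns_real hE hxR hxx hγR hγγ hval hn0 with
      ⟨hk, hm, hnp⟩ | ⟨hk, hp, hnm⟩
    · refine Or.inl ⟨⟨hm, ?_⟩, hnp⟩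
      rintro ⟨hbad, -⟩
      rcases hk with rfl | rfl
      · have e : form (γ - x) (γ - x) = 0 := by
          simp only [Stmt14Aux.subL hs, Stmt14Aux.subR hs, hγγ, hs.symm x γ]
          push_cast at hval
          linear_combination - hval
        exact (Stmt14Aux.badRoot_norm hs hbad).1 e
      · refine Stmt14Aux.badRoot_not_two hE hbad hm hγR hγγ (Or.inl ?_)
        have e1 : form γ (γ - x) = -(form x x) := by
          rw [Stmt14Aux.subR hs, hγγ]
          push_cast at hval
          linear_combination - hval / 2
        have e2 : form (γ - x) (γ - x) = -(form x x) := by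
          simp only [Stmt14Aux.subL hs, Stmt14Aux.subR hs, hγγ, hs.symm x γ]
          push_cast at hval
          linear_combination - hval
        rw [e1, e2]
    · refine Or.inr ⟨⟨hp, ?_⟩, hnm⟩
      rintro ⟨hbad, -⟩
      rcases hk with rfl | rfl
      · have e : form (γ + x) (γ + x) = 0 := by
          simp only [Stmt14Aux.addL hs, Stmt14Aux.addR hs, hγγ, hs.symm x γ]
          push_cast at hval
          linear_combination hval
        exact (Stmt14Aux.badRoot_norm hs hbad).1 e
      · refine Stmt14Aux.badRoot_not_two hE hbad hp hγR hγγ (Or.inl ?_)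
        have e1 : form γ (γ + x) = -(form x x) := by
          rw [Stmt14Aux.addR hs, hγγ]
          push_cast at hval
          linear_combination hval / 2
        have e2 : form (γ + x) (γ + x) = -(form x x) := by
          simp only [Stmt14Aux.addL hs, Stmt14Aux.addR hs, hγγ, hs.symm x γ]
          push_cast at hval
          linear_combination hval
        rw [e1, e2]
  refine ⟨S, ⟨hSsub, ?_, hnsS 0 hE.zero_mem (Stmt14Aux.zeroL hs 0), ?_, ?_⟩,
    ?_, hclos, ?_⟩
  · -- nondegeneracy on the closure of S
    intro a _ hab
    apply hnd
    intro b
    exact hab b (by rw [hcl_top]; trivial)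
  · -- closure under reflections
    intro α hαS hαα β hβS k hval
    have hαR := hSsub hαS
    have hβR := hSsub hβS
    refine ⟨Stmt14Aux.refl_mem hE hαR hαα hβR hval, ?_⟩
    rintro ⟨hbad, hinV⟩
    have hval' : 2 * form (β - k • α) α = ((-k : ℤ) : F) * form α α := by
      push_cast
      rw [Stmt14Aux.subL hs, Stmt14Aux.zsmulL hs]
      linear_combination hval
    have hbad' := Stmt14Aux.badRoot_reflect hE hαR hαα hval' hbad
    have e : β - k • α - (-k) • α = β := by rw [neg_zsmul]; abel
    rw [e] at hbad'
    have hnorm := Stmt14Aux.refl_norm hs hval'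
    rw [e] at hnorm
    exact hβS.2 ⟨hbad', by rw [hnorm]; exact hinV⟩
  · -- the nonsingular condition
    intro γ hγS hγγ β hβS hβγ
    have hγR := hSsub hγS
    have hβR := hSsub hβS
    have hγβ : form γ β ≠ 0 := by rw [hs.symm γ β]; exact hβγ
    by_cases hββ : form β β = 0
    · -- β nonsingular
      by_cases hp : γ + β ∈ R
      · by_cases hpS : γ + β ∈ S
        · exact Or.inr hpS
        · have hbadV : Stmt14Aux.BadRoot form R (γ + β) ∧
              form (γ + β) (γ + β) ∈ V := by
            by_contra hc
            exact hpS ⟨hp, hc⟩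
          obtain ⟨hbad, hinV⟩ := hbadV
          have hzz : form (γ + β) (γ + β) = 2 * form γ β := by
            simp only [Stmt14Aux.addL hs, Stmt14Aux.addR hs, hγγ, hββ,
              hs.symm β γ]
            ring
          have hhalf : 2 * form γ (γ + β) = form (γ + β) (γ + β) := by
            rw [hzz, Stmt14Aux.addR hs, hγγ]; ring
          have hgm := Stmt14Aux.badRoot_pair hL hbad hp hγR hγγ hhalf
          have e : γ + γ - (γ + β) = γ - β := by abel
          rw [e] at hgm
          refine Or.inl ⟨hgm, ?_⟩
          rintro ⟨-, hinV'⟩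
          have hmm : form (γ - β) (γ - β) = -(2 * form γ β) := by
            simp only [Stmt14Aux.subL hs, Stmt14Aux.subR hs, hγγ, hββ,
              hs.symm β γ]
            ring
          have h2 : (2 * form γ β) ≠ 0 := mul_ne_zero two_ne_zero hγβ
          exact ((hV (2 * form γ β) h2).mp (by rwa [hzz] at hinV))
            (by rwa [hmm] at hinV')
      · have hm : γ - β ∈ R := by
          rcases hE.ns_string β hβR hββ γ hγR hβγ with h' | h'
          · exact h'
          · exact absurd h' hp
        refine Or.inl ⟨hm, ?_⟩
        rintro ⟨hbad, -⟩
        have hmm : form (γ - β) (γ - β) = -(2 * form γ β) := by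
          simp only [Stmt14Aux.subL hs, Stmt14Aux.subR hs, hγγ, hββ,
            hs.symm β γ]
          ring
        have hhalf : 2 * form γ (γ - β) = form (γ - β) (γ - β) := by
          rw [hmm, Stmt14Aux.subR hs, hγγ]; ring
        have hgm := Stmt14Aux.badRoot_pair hL hbad hm hγR hγγ hhalf
        have e : γ + γ - (γ - β) = γ + β := by abel
        rw [e] at hgm
        exact absurd hgm hp
    · -- β real
      obtain ⟨k, hk⟩ := hE.cartan β hβR hββ γ hγR
      have hval : 2 * form γ β = (k : F) * form β β := by
        rw [hs.symm γ β]; exact hk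
      rcases hreal_nb β γ hβR hββ hγR hγγ hγβ k hval with ⟨hmS, -⟩ | ⟨hpS, -⟩
      · exact Or.inl hmS
      · exact Or.inr hpS
  · -- nsRoots S = nsRoots R
    ext x
    simp only [nsRoots, Set.mem_union, Set.mem_setOf_eq, Set.mem_singleton_iff]
    constructor
    · rintro (⟨hxS, h1, h2⟩ | h0)
      · exact Or.inl ⟨hSsub hxS, h1, h2⟩
      · exact Or.inr h0
    · rintro (⟨hxR, h1, h2⟩ | h0)
      · exact Or.inl ⟨hnsS x hxR h1, h1, h2⟩
      · exact Or.inr h0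
  · -- the uniqueness statement
    intro α hαS δ hδns hαδ
    have hαR := hSsub hαS
    have hδS : δ ∈ S ∧ form δ δ = 0 := by
      rcases hδns with ⟨hδS, h1, -⟩ | h0
      · exact ⟨hδS, h1⟩
      · exfalso
        apply hαδ
        rw [Set.mem_singleton_iff] at h0
        rw [h0]
        exact Stmt14Aux.zeroR hs α
    obtain ⟨hδS, hδ0⟩ := hδS
    have hδR := hSsub hδS
    have hδα : form δ α ≠ 0 := by rw [hs.symm δ α]; exact hαδ
    have e1 : α + (1 : ℤ) • δ = α + δ := by rw [one_zsmul]
    have em1 : α + (-1 : ℤ) • δ = α - δ := by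
      rw [neg_zsmul, one_zsmul, ← sub_eq_add_neg]
    by_cases hαα : form α α = 0
    · -- α nonsingular
      have hnp : form (α + δ) (α + δ) = 2 * form α δ := by
        simp only [Stmt14Aux.addL hs, Stmt14Aux.addR hs, hαα, hδ0, hs.symm δ α]
        ring
      have hnm : form (α - δ) (α - δ) = -(2 * form α δ) := by
        simp only [Stmt14Aux.subL hs, Stmt14Aux.subR hs, hαα, hδ0, hs.symm δ α]
        ring
      have h2 : 2 * form α δ ≠ 0 := mul_ne_zero two_ne_zero hαδ
      by_cases hp : α + δ ∈ R
      · by_cases hm : α - δ ∈ R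
        · -- both sides are roots: both bad, V decides
          have hbadp : Stmt14Aux.BadRoot form R (α + δ) :=
            ⟨α, δ, hαR, hαα, hδR, hδ0, hαδ, hm, rfl⟩
          have hbadm : Stmt14Aux.BadRoot form R (α - δ) := by
            refine ⟨α, -δ, hαR, hαα, hE.neg_mem _ hδR, ?_, ?_, ?_, ?_⟩
            · rw [Stmt14Aux.negL hs, Stmt14Aux.negR hs, hδ0]; ring
            · rw [Stmt14Aux.negR hs]; exact neg_ne_zero.mpr hαδ
            · rw [sub_neg_eq_add]; exact hp
            · rw [← sub_eq_add_neg]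
          by_cases hinV : (2 * form α δ) ∈ V
          · have hmS : α - δ ∈ S := by
              refine ⟨hm, ?_⟩
              rintro ⟨-, hinV'⟩
              exact ((hV _ h2).mp hinV) (by rwa [hnm] at hinV')
            refine ⟨-1, ⟨Or.inr rfl, by rwa [em1]⟩, ?_⟩
            rintro r' ⟨hr', hmem⟩
            rcases hr' with rfl | rfl
            · exfalso
              rw [e1] at hmem
              exact hmem.2 ⟨hbadp, by rwa [hnp]⟩
            · rfl
          · have hinV' : (-(2 * form α δ)) ∈ V := by
              by_contra hc
              exact hinV ((hV _ h2).mpr hc)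
            have hpS : α + δ ∈ S := by
              refine ⟨hp, ?_⟩
              rintro ⟨-, hinV''⟩
              exact hinV (by rwa [hnp] at hinV'')
            refine ⟨1, ⟨Or.inl rfl, by rwa [e1]⟩, ?_⟩
            rintro r' ⟨hr', hmem⟩
            rcases hr' with rfl | rfl
            · rfl
            · exfalso
              rw [em1] at hmem
              exact hmem.2 ⟨hbadm, by rwa [hnm]⟩
        · -- only the plus side is a root
          have hnb : ¬ Stmt14Aux.BadRoot form R (α + δ) := by
            intro hbad
            have hhalf : 2 * form α (α + δ) = form (α + δ) (α + δ) := by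
              rw [hnp, Stmt14Aux.addR hs, hαα]; ring
            have := Stmt14Aux.badRoot_pair hL hbad hp hαR hαα hhalf
            rw [show α + α - (α + δ) = α - δ from by abel] at this
            exact hm this
          have hpS : α + δ ∈ S := ⟨hp, fun hc => hnb hc.1⟩
          refine ⟨1, ⟨Or.inl rfl, by rwa [e1]⟩, ?_⟩
          rintro r' ⟨hr', hmem⟩
          rcases hr' with rfl | rfl
          · rfl
          · exfalso
            rw [em1] at hmem
            exact hm (hSsub hmem)
      · -- only the minus side is a root
        have hm : α - δ ∈ R := by
          rcases hE.ns_string δ hδR hδ0 α hαR hδα with h' | h'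
          · exact h'
          · exact absurd h' hp
        have hnb : ¬ Stmt14Aux.BadRoot form R (α - δ) := by
          intro hbad
          have hhalf : 2 * form α (α - δ) = form (α - δ) (α - δ) := by
            rw [hnm, Stmt14Aux.subR hs, hαα]; ring
          have := Stmt14Aux.badRoot_pair hL hbad hm hαR hαα hhalf
          rw [show α + α - (α - δ) = α + δ from by abel] at this
          exact hp this
        have hmS : α - δ ∈ S := ⟨hm, fun hc => hnb hc.1⟩
        refine ⟨-1, ⟨Or.inr rfl, by rwa [em1]⟩, ?_⟩
        rintro r' ⟨hr', hmem⟩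
        rcases hr' with rfl | rfl
        · exfalso
          rw [e1] at hmem
          exact hp (hSsub hmem)
        · rfl
    · -- α real
      obtain ⟨k, hk⟩ := hE.cartan α hαR hαα δ hδR
      have hval : 2 * form δ α = (k : F) * form α α := by
        rw [hs.symm δ α]; exact hk
      rcases hreal_nb α δ hαR hαα hδR hδ0 hδα k hval with ⟨hmS, hnp⟩ | ⟨hpS, hnm⟩
      · -- δ - α ∈ S, δ + α ∉ R
        have hmS' : α - δ ∈ S := by
          have := hSneg _ hmS
          rwa [neg_sub] at this
        refine ⟨-1, ⟨Or.inr rfl, by rwa [em1]⟩, ?_⟩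
        rintro r' ⟨hr', hmem⟩
        rcases hr' with rfl | rfl
        · exfalso
          rw [e1] at hmem
          apply hnp
          have := hSsub hmem
          rwa [add_comm] at this
        · rfl
      · -- δ + α ∈ S, δ - α ∉ R
        have hpS' : α + δ ∈ S := by rwa [add_comm] at hpS
        refine ⟨1, ⟨Or.inl rfl, by rwa [e1]⟩, ?_⟩
        rintro r' ⟨hr', hmem⟩
        rcases hr' with rfl | rfl
        · rfl
        · exfalso
          rw [em1] at hmem
          apply hnm
          have := hE.neg_mem _ (hSsub hmem)
          rwa [neg_sub] at this
end

section
/- Let (A, (·,·), R) be a locally finite root supersystem over a field F of characteristic zero. Since the form is nondegenerate, A is torsion-free; identify A with its image in F ⊗_ℤ A. If δ ∈ R_ns is nonzero and k ∈ F is a scalar such that k·δ lies in (the image of) R, then k ∈ {0, 1, −1}. -/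
open Pointwise

open TensorProduct in
theorem stmt15 {F : Type*} [Field F] [CharZero F] {A : Type*} [AddCommGroup A]
    (form : A → A → F) (R : Set A) (h : IsLFRSS form R)
    (δ : A) (hδ : δ ∈ nsRoots form R) (hδ0 : δ ≠ 0) (k : F)
    (hk : ∃ α ∈ R, k • ((1 : F) ⊗ₜ[ℤ] δ : F ⊗[ℤ] A) = (1 : F) ⊗ₜ[ℤ] α) :
    k = 0 ∨ k = 1 ∨ k = -1 := by
  obtain ⟨hE, hnd⟩ := h
  have sym := hE.symm
  have addl := hE.add_left
  have addr : ∀ a b c : A, form a (b + c) = form a b + form a c := by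
    intro a b c
    rw [sym a (b + c), addl, sym b a, sym c a]
  have fsmul : ∀ (n : ℤ) (a x : A), form (n • a) x = (n : F) * form a x := by
    intro n a x
    let ψ : A →+ F := AddMonoidHom.mk' (fun a => form a x) (fun a b => addl a b x)
    have := AddMonoidHom.map_zsmul ψ n a
    simpa [ψ, zsmul_eq_mul] using this
  have fsmulr : ∀ (n : ℤ) (a x : A), form x (n • a) = (n : F) * form x a := by
    intro n a x
    rw [sym x (n • a), fsmul, sym a x]
  obtain ⟨α, hαR, hkeq⟩ := hk
  rw [TensorProduct.smul_tmul', smul_eq_mul, mul_one] at hkeq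
  have key : ∀ x : A, form α x = k * form δ x := by
    intro x
    let ψ : A →+ F := AddMonoidHom.mk' (fun a => form a x) (fun a b => addl a b x)
    let B : F →ₗ[ℤ] A →ₗ[ℤ] F :=
      { toFun := fun c => c • ψ.toIntLinearMap
        map_add' := fun c d => by simp [add_smul]
        map_smul' := fun n c => by simp [mul_smul, Int.cast_smul_eq_zsmul] }
    have := congrArg (TensorProduct.lift B) hkeq
    simpa [B, ψ, TensorProduct.lift.tmul, smul_eq_mul] using this.symm
  rcases hδ with ⟨hδR, hδδ, hδrad⟩ | h0
  swap
  · exact absurd h0 hδ0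
  have hαδ : form α δ = 0 := by rw [key, hδδ, mul_zero]
  have hδα : form δ α = 0 := by rw [sym δ α, hαδ]
  have hαα : form α α = 0 := by rw [key, hδα, mul_zero]
  by_cases hk0 : k = 0
  · exact Or.inl hk0
  right
  -- find β ∈ R non-orthogonal to δ
  have hβex : ∃ β ∈ R, form δ β ≠ 0 := by
    by_contra hcon
    push_neg at hcon
    refine hδrad ?_
    intro b
    let ψ : A →+ F := AddMonoidHom.mk' (fun a => form δ a) (fun a c => addr δ a c)
    have hle : AddSubgroup.closure R ≤ ψ.ker :=
      (AddSubgroup.closure_le _).mpr (fun x hx => by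
        simpa [ψ, AddMonoidHom.mem_ker] using hcon x hx)
    have hb : b ∈ AddSubgroup.closure R := by
      rw [hE.closure_eq_top]; exact AddSubgroup.mem_top b
    simpa [ψ, AddMonoidHom.mem_ker] using hle hb
  obtain ⟨β, hβR, hδβ⟩ := hβex
  -- produce a nonsingular root γ non-orthogonal to δ
  obtain ⟨γ, hγR, hγγ, hδγ⟩ : ∃ γ ∈ R, form γ γ = 0 ∧ form δ γ ≠ 0 := by
    by_cases hββ : form β β = 0
    · exact ⟨β, hβR, hββ, hδβ⟩
    · obtain ⟨p, q, hpq, hmem⟩ := hE.string β hβR hββ δ hδR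
      have hjne : ((q : F) - (p : F)) ≠ 0 := by
        intro hj
        apply hδβ
        have h2 : 2 * form δ β = 0 := by
          rw [hpq]
          linear_combination (-(form β β)) * hj
        have := mul_eq_zero.mp h2
        rcases this with h' | h'
        · exact absurd h' two_ne_zero
        · exact h'
      refine ⟨δ + ((q : ℤ) - (p : ℤ)) • β, (hmem _).mpr ⟨by omega, by omega⟩, ?_, ?_⟩
      · simp only [addl, addr, fsmul, fsmulr]
        push_cast
        linear_combination hδδ + ((q : F) - (p : F)) * sym β δ + ((q : F) - (p : F)) * hpq
      · have hexp : form δ (δ + ((q : ℤ) - (p : ℤ)) • β)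
            = ((q : F) - (p : F)) * form δ β := by
          simp only [addr, fsmulr]
          push_cast
          linear_combination hδδ
        rw [hexp]
        exact mul_ne_zero hjne hδβ
  have hγδ : form γ δ ≠ 0 := by rw [sym γ δ]; exact hδγ
  have hγα : form γ α = k * form δ γ := by rw [sym γ α, key]
  have hαγ : form α γ = k * form δ γ := key γ
  -- step (a): k is (the image of) an integer
  obtain ⟨s, hs, hηR⟩ : ∃ s : ℤ, (s = 1 ∨ s = -1) ∧ γ + s • δ ∈ R := by
    rcases hE.ns_string δ hδR hδδ γ hγR hδγ with h1 | h1
    · exact ⟨-1, Or.inr rfl, by simpa [sub_eq_add_neg] using h1⟩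
    · exact ⟨1, Or.inl rfl, by simpa using h1⟩
  have hsne : (s : F) ≠ 0 := by
    rcases hs with rfl | rfl <;> norm_num
  have hηη : form (γ + s • δ) (γ + s • δ) = 2 * (s : F) * form δ γ := by
    simp only [addl, addr, fsmul, fsmulr]
    linear_combination hγγ + (s : F) * sym γ δ + (s : F) * (s : F) * hδδ
  have hηηne : form (γ + s • δ) (γ + s • δ) ≠ 0 := by
    rw [hηη]
    exact mul_ne_zero (mul_ne_zero two_ne_zero hsne) hδγ
  have hηα : form (γ + s • δ) α = k * form δ γ := by
    simp only [addl, fsmul]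
    linear_combination hγα + (s : F) * hδα
  obtain ⟨n, hn⟩ := hE.cartan _ hηR hηηne α hαR
  rw [hηα, hηη] at hn
  have hkns : k = (n : F) * (s : F) := by
    refine mul_right_cancel₀ hδγ ?_
    linear_combination hn / 2
  -- step (b): 1/k is an integer
  have hαγne : form α γ ≠ 0 := by
    rw [hαγ]; exact mul_ne_zero hk0 hδγ
  obtain ⟨t, ht, hη'R⟩ : ∃ t : ℤ, (t = 1 ∨ t = -1) ∧ γ + t • α ∈ R := by
    rcases hE.ns_string α hαR hαα γ hγR hαγne with h1 | h1
    · exact ⟨-1, Or.inr rfl, by simpa [sub_eq_add_neg] using h1⟩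
    · exact ⟨1, Or.inl rfl, by simpa using h1⟩
  have htne : (t : F) ≠ 0 := by
    rcases ht with rfl | rfl <;> norm_num
  have hη'η' : form (γ + t • α) (γ + t • α) = 2 * (t : F) * (k * form δ γ) := by
    simp only [addl, addr, fsmul, fsmulr]
    linear_combination hγγ + (t : F) * (t : F) * hαα + (t : F) * hαγ + (t : F) * hγα
  have hη'ne : form (γ + t • α) (γ + t • α) ≠ 0 := by
    rw [hη'η']
    exact mul_ne_zero (mul_ne_zero two_ne_zero htne) (mul_ne_zero hk0 hδγ)
  have hη'δ : form (γ + t • α) δ = form δ γ := by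
    simp only [addl, fsmul]
    linear_combination sym γ δ + (t : F) * hαδ
  obtain ⟨n', hn'⟩ := hE.cartan _ hη'R hη'ne δ hδR
  rw [hη'δ, hη'η'] at hn'
  have hone : (1 : F) = (n' : F) * (t : F) * k := by
    refine mul_right_cancel₀ hδγ ?_
    linear_combination hn' / 2
  -- combine
  have hcast : (((n' * t) * (n * s) : ℤ) : F) = ((1 : ℤ) : F) := by
    push_cast
    linear_combination -hone - ((n' : F) * (t : F)) * hkns
  have hint : (n' * t) * (n * s) = 1 := by exact_mod_cast hcast
  have hunit : IsUnit (n * s) :=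
    IsUnit.of_mul_eq_one (n' * t) (by rw [mul_comm]; exact hint)
  rcases Int.isUnit_iff.mp hunit with hns | hns
  · left
    rw [hkns, ← Int.cast_mul, hns, Int.cast_one]
  · right
    rw [hkns, ← Int.cast_mul, hns]
    norm_num
end

section
/- Let (A, (·,·), R) be an irreducible locally finite root supersystem over a field F of characteristic zero and let Π be a base of R. Then for every finite subset X of Π there is a finite subset Y_X of Π with X ⊆ Y_X such that the form restricted to the subgroup ⟨Y_X⟩ generated by Y_X is nondegenerate. Moreover, if X is connected, then Y_X can be chosen to be connected. -/
open Pointwise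

section Aux

variable {F : Type*} [Field F] {A : Type*} [AddCommGroup A] {form : A → A → F}

/-- The form as an additive hom in the first variable. -/
def IsSymForm.toHom (h : IsSymForm form) (b : A) : A →+ F :=
  AddMonoidHom.mk' (fun a => form a b) (fun x y => h.add_left x y b)

lemma IsSymForm.zsmul_left (h : IsSymForm form) (n : ℤ) (a b : A) :
    form (n • a) b = (n : F) * form a b := by
  have := map_zsmul (h.toHom b) n a
  simpa [IsSymForm.toHom, zsmul_eq_mul] using this

lemma IsSymForm.zero_left (h : IsSymForm form) (b : A) : form 0 b = 0 :=
  map_zero (h.toHom b)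

lemma IsSymForm.zsmul_right (h : IsSymForm form) (n : ℤ) (a b : A) :
    form a (n • b) = (n : F) * form a b := by
  rw [h.symm, h.zsmul_left, h.symm]

section ConnectedIn

variable {X Y : Set A} {α β γ : A}

lemma ConnectedIn.mono (hXY : X ⊆ Y) (h : ConnectedIn form X α β) :
    ConnectedIn form Y α β := by
  obtain ⟨n, c, hc, h0, hl, hadj⟩ := h
  exact ⟨n, c, fun i => hXY (hc i), h0, hl, hadj⟩

lemma ConnectedIn.refl' (hα : α ∈ X) : ConnectedIn form X α α :=
  ⟨0, fun _ => α, fun _ => hα, rfl, rfl, fun i => i.elim0⟩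

lemma ConnectedIn.symm' (hsym : ∀ a b : A, form a b = form b a)
    (h : ConnectedIn form X α β) : ConnectedIn form X β α := by
  obtain ⟨n, c, hc, h0, hl, hadj⟩ := h
  refine ⟨n, fun i => c i.rev, fun i => hc _, ?_, ?_, ?_⟩
  · show c (Fin.rev 0) = β
    rw [Fin.rev_zero, hl]
  · show c (Fin.last n).rev = α
    rw [Fin.rev_last, h0]
  · intro i
    show form (c i.castSucc.rev) (c i.succ.rev) ≠ 0
    rw [Fin.rev_castSucc, Fin.rev_succ, hsym]
    exact hadj i.rev

lemma ConnectedIn.extend (hγ : γ ∈ X) (hne : form β γ ≠ 0)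
    (h : ConnectedIn form X α β) : ConnectedIn form X α γ := by
  obtain ⟨n, c, hc, h0, hl, hadj⟩ := h
  refine ⟨n + 1, Fin.snoc c γ, ?_, ?_, ?_, ?_⟩
  · intro i
    refine Fin.lastCases ?_ ?_ i
    · rw [Fin.snoc_last]; exact hγ
    · intro j; rw [Fin.snoc_castSucc]; exact hc j
  · rw [show (0 : Fin (n + 1 + 1)) = Fin.castSucc 0 from (Fin.castSucc_zero).symm,
      Fin.snoc_castSucc]
    exact h0
  · rw [Fin.snoc_last]
  · intro i
    refine Fin.lastCases ?_ ?_ i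
    · rw [Fin.succ_last, Fin.snoc_last, Fin.snoc_castSucc, hl]
      exact hne
    · intro j
      rw [Fin.succ_castSucc, Fin.snoc_castSucc, Fin.snoc_castSucc]
      exact hadj j

lemma isConnectedSet_insert [DecidableEq A] (hsym : ∀ a b : A, form a b = form b a)
    {s : Finset A} (hs : IsConnectedSet form ↑s) {p β : A} (hp : p ∈ s)
    (hpβ : form p β ≠ 0) : IsConnectedSet form ↑(insert β s) := by
  have hsub : (↑s : Set A) ⊆ ↑(insert β s) := by
    intro x hx
    simp only [Finset.coe_insert, Set.mem_insert_iff]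
    exact Or.inr hx
  have hβmem : β ∈ (↑(insert β s) : Set A) := by simp
  have key : ∀ α ∈ (↑s : Set A), ConnectedIn form ↑(insert β s) α β := by
    intro α hα
    exact ((hs α hα p hp).mono hsub).extend hβmem hpβ
  intro α hα γ hγ
  rw [Finset.coe_insert, Set.mem_insert_iff] at hα hγ
  rcases hα with rfl | hα
  · rcases hγ with rfl | hγ
    · exact ConnectedIn.refl' hβmem
    · exact (key γ hγ).symm' hsym
  · rcases hγ with rfl | hγ
    · exact key α hα
    · exact (hs α hα γ hγ).mono hsub

end ConnectedIn

end Aux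

section Core

variable {F : Type*} [Field F] [CharZero F] {A : Type*} [AddCommGroup A]

/-- The "rational radical" of the form restricted to the span of a finite set `s`. -/
noncomputable def Kspace (form : A → A → F) (s : Finset A) : Submodule ℚ (A →₀ ℚ) where
  carrier := {c | (∀ q ∉ s, c q = 0) ∧ ∀ p ∈ s, ∑ q ∈ s, (c q : F) * form q p = 0}
  add_mem' := by
    rintro a b ⟨ha1, ha2⟩ ⟨hb1, hb2⟩
    refine ⟨fun q hq => by simp [Finsupp.add_apply, ha1 q hq, hb1 q hq], fun p hp => ?_⟩
    have h : ∀ q ∈ s, (((a + b) q : ℚ) : F) * form q p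
        = (a q : F) * form q p + (b q : F) * form q p := by
      intro q _
      rw [Finsupp.add_apply]
      push_cast
      ring
    rw [Finset.sum_congr rfl h, Finset.sum_add_distrib, ha2 p hp, hb2 p hp, add_zero]
  zero_mem' := ⟨fun q _ => rfl, fun p _ => by simp⟩
  smul_mem' := by
    rintro r a ⟨ha1, ha2⟩
    refine ⟨fun q hq => by simp [Finsupp.smul_apply, ha1 q hq], fun p hp => ?_⟩
    have h : ∀ q ∈ s, (((r • a) q : ℚ) : F) * form q p
        = (r : F) * ((a q : F) * form q p) := by
      intro q _
      rw [Finsupp.smul_apply, smul_eq_mul]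
      push_cast
      ring
    rw [Finset.sum_congr rfl h, ← Finset.mul_sum, ha2 p hp, mul_zero]

lemma mem_Kspace {form : A → A → F} {s : Finset A} {c : A →₀ ℚ} :
    c ∈ Kspace form s ↔
      (∀ q ∉ s, c q = 0) ∧ ∀ p ∈ s, ∑ q ∈ s, (c q : F) * form q p = 0 :=
  Iff.rfl

lemma Kspace_le_supported (form : A → A → F) (s : Finset A) :
    Kspace form s ≤ Finsupp.supported ℚ ℚ (↑s : Set A) := by
  intro c hc
  rw [Finsupp.mem_supported]
  intro q hq
  by_contra hqs
  exact (Finsupp.mem_support_iff.mp hq) ((mem_Kspace.mp hc).1 q hqs)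

instance Kspace_fd (form : A → A → F) (s : Finset A) :
    FiniteDimensional ℚ (Kspace form s) := by
  have h2 : FiniteDimensional ℚ ((↑s : Set A) →₀ ℚ) := by
    have : Finite (↑s : Set A) := s.finite_toSet
    infer_instance
  have h1 : FiniteDimensional ℚ (Finsupp.supported ℚ ℚ (↑s : Set A)) :=
    (Finsupp.supportedEquivFinsupp (M := ℚ) (R := ℚ) (↑s : Set A)).symm.finiteDimensional
  exact Submodule.finiteDimensional_of_le (Kspace_le_supported form s)

variable {form : A → A → F} {P : Set A}

/-- A nonzero rational radical vector pairs nontrivially with some `β ∈ P`. -/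
lemma exists_beta (hform : IsSymForm form)
    (hnd : ∀ a : A, (∀ b, form a b = 0) → a = 0)
    (hPli : LinearIndependent ℤ (fun p : P => (p : A)))
    (hPspan : Submodule.span ℤ P = ⊤)
    {s : Finset A} (hsP : ↑s ⊆ P) {c : A →₀ ℚ} (hc : c ∈ Kspace form s) (hc0 : c ≠ 0) :
    ∃ β ∈ P, ∑ q ∈ s, (c q : F) * form q β ≠ 0 := by
  obtain ⟨hc1, hc2⟩ := mem_Kspace.mp hc
  by_contra hcon
  push_neg at hcon
  -- clear denominators
  set D : ℤ := ∏ q ∈ c.support, ((c q).den : ℤ) with hD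
  have hDpos : 0 < D := Finset.prod_pos (fun q _ => by exact_mod_cast (c q).pos)
  have hint : ∀ q : A, ∃ m : ℤ, (m : ℚ) = (D : ℚ) * c q := by
    intro q
    by_cases hq : q ∈ c.support
    · have hdvd : ((c q).den : ℤ) ∣ D := Finset.dvd_prod_of_mem _ hq
      obtain ⟨k, hk⟩ := hdvd
      refine ⟨k * (c q).num, ?_⟩
      have hDQ : (D : ℚ) = ((c q).den : ℚ) * (k : ℚ) := by exact_mod_cast hk
      rw [hDQ]
      push_cast
      rw [mul_comm ((c q).den : ℚ) (k : ℚ), mul_assoc, Rat.den_mul_eq_num]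
    · exact ⟨0, by simp [Finsupp.notMem_support_iff.mp hq]⟩
  choose m hm using hint
  set v : A := ∑ q ∈ s, m q • q with hv
  have hvform : ∀ β ∈ P, form v β = 0 := by
    intro β hβ
    have h1 : form v β = ∑ q ∈ s, (m q : F) * form q β := by
      have h0 : form v β = ∑ q ∈ s, form (m q • q) β :=
        map_sum (hform.toHom β) (fun q => m q • q) s
      rw [h0]
      exact Finset.sum_congr rfl fun q _ => hform.zsmul_left (m q) q β
    rw [h1]
    have h2 : ∀ q ∈ s, (m q : F) * form q β = (D : F) * ((c q : F) * form q β) := by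
      intro q _
      have h3 : ((m q : ℚ) : F) = (((D : ℚ) * c q : ℚ) : F) := by rw [hm]
      push_cast at h3 ⊢
      rw [h3]
      ring
    rw [Finset.sum_congr rfl h2, ← Finset.mul_sum, hcon β hβ, mul_zero]
  have hvzero : v = 0 := by
    apply hnd
    intro b
    have hb : b ∈ Submodule.span ℤ P := by
      rw [hPspan]
      exact Submodule.mem_top
    induction hb using Submodule.span_induction with
    | mem x hx => exact hvform x hx
    | zero => rw [hform.symm]; exact hform.zero_left v
    | add x y _ _ hx hy =>
        rw [hform.symm, hform.add_left, hform.symm x, hform.symm y, hx, hy, add_zero]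
    | smul a x _ hx => rw [hform.zsmul_right, hx, mul_zero]
  -- contradiction with linear independence
  obtain ⟨q₀, hq₀⟩ := Finsupp.ne_iff.mp hc0
  rw [Finsupp.coe_zero, Pi.zero_apply] at hq₀
  have hq₀s : q₀ ∈ s := by
    by_contra h
    exact hq₀ (hc1 q₀ h)
  have hmq₀ : m q₀ ≠ 0 := by
    intro h
    apply hq₀
    have h1 := hm q₀
    rw [h] at h1
    have hD0 : (D : ℚ) ≠ 0 := by exact_mod_cast hDpos.ne'
    have h2 : (D : ℚ) * c q₀ = 0 := by exact_mod_cast h1.symm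
    exact (mul_eq_zero.mp h2).resolve_left hD0
  set l : A →₀ ℤ := ∑ q ∈ s, Finsupp.single q (m q) with hl
  have hlval : ∀ q ∈ s, l q = m q := by
    intro q hq
    rw [hl, Finsupp.finset_sum_apply]
    rw [Finset.sum_eq_single q]
    · simp
    · intro b _ hbq
      exact Finsupp.single_eq_of_ne' hbq
    · intro h
      exact absurd hq h
  have hlsupp : l ∈ Finsupp.supported ℤ ℤ P := by
    rw [Finsupp.mem_supported]
    intro q hq
    have hqs : q ∈ s := by
      by_contra h
      apply Finsupp.mem_support_iff.mp hq
      rw [hl, Finsupp.finset_sum_apply]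
      exact Finset.sum_eq_zero fun b hb =>
        Finsupp.single_eq_of_ne' (fun hbq => h (hbq ▸ hb))
    exact hsP hqs
  have hlcomb : Finsupp.linearCombination ℤ id l = 0 := by
    rw [hl, map_sum]
    have h1 : ∀ q ∈ s, Finsupp.linearCombination ℤ (id : A → A) (Finsupp.single q (m q))
        = m q • q := by
      intro q _
      rw [Finsupp.linearCombination_single]
      rfl
    rw [Finset.sum_congr rfl h1]
    exact hvzero
  have hl0 := linearIndepOn_iff.mp (linearIndependent_subtype_iff.mp hPli) l hlsupp hlcomb
  rw [hl0] at hlval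
  exact hmq₀ (by simpa using (hlval q₀ hq₀s).symm)

/-- The key descent step. -/
lemma Kspace_insert_lt [DecidableEq A] (hform : IsSymForm form)
    {s : Finset A} {c : A →₀ ℚ} (hc : c ∈ Kspace form s)
    {β : A} (hβ : ∑ q ∈ s, (c q : F) * form q β ≠ 0) :
    Kspace form (insert β s) < Kspace form s ∧ β ∉ s := by
  obtain ⟨hc1, hc2⟩ := mem_Kspace.mp hc
  have hβs : β ∉ s := fun h => hβ (hc2 β h)
  refine ⟨lt_of_le_of_ne ?_ ?_, hβs⟩
  · intro c' hc'
    obtain ⟨hc'1, hc'2⟩ := mem_Kspace.mp hc'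
    have hc'β : c' β = 0 := by
      have key : ∑ q ∈ insert β s, (c' q : F) * (∑ p ∈ s, (c p : F) * form q p) = 0 := by
        have hswap : ∑ q ∈ insert β s, (c' q : F) * (∑ p ∈ s, (c p : F) * form q p)
            = ∑ p ∈ s, (c p : F) * (∑ q ∈ insert β s, (c' q : F) * form q p) := by
          simp only [Finset.mul_sum]
          rw [Finset.sum_comm]
          exact Finset.sum_congr rfl fun p _ => Finset.sum_congr rfl fun q _ => by ring
        rw [hswap]
        exact Finset.sum_eq_zero fun p hp => by
          rw [hc'2 p (Finset.mem_insert_of_mem hp), mul_zero]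
      rw [Finset.sum_insert hβs] at key
      have hz : ∀ q ∈ s, (c' q : F) * (∑ p ∈ s, (c p : F) * form q p) = 0 := by
        intro q hq
        have h1 : ∑ p ∈ s, (c p : F) * form q p = ∑ p ∈ s, (c p : F) * form p q :=
          Finset.sum_congr rfl fun p _ => by rw [hform.symm]
        rw [h1, hc2 q hq, mul_zero]
      rw [Finset.sum_eq_zero hz, add_zero] at key
      have hL : (∑ p ∈ s, (c p : F) * form β p) ≠ 0 := by
        have h1 : ∑ p ∈ s, (c p : F) * form β p = ∑ p ∈ s, (c p : F) * form p β :=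
          Finset.sum_congr rfl fun p _ => by rw [hform.symm]
        rw [h1]
        exact hβ
      have h2 : (c' β : F) = 0 := (mul_eq_zero.mp key).resolve_right hL
      exact_mod_cast h2
    rw [mem_Kspace]
    constructor
    · intro q hq
      by_cases hqβ : q = β
      · rw [hqβ]
        exact hc'β
      · exact hc'1 q (by simp [hqβ, hq])
    · intro p hp
      have h3 := hc'2 p (Finset.mem_insert_of_mem hp)
      rw [Finset.sum_insert hβs, hc'β] at h3
      simpa using h3
  · intro heq
    have hcmem : c ∈ Kspace form (insert β s) := by
      rw [heq]
      exact hc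
    have h4 := (mem_Kspace.mp hcmem).2 β (Finset.mem_insert_self β s)
    rw [Finset.sum_insert hβs, hc1 β hβs] at h4
    simp only [Rat.cast_zero, zero_mul, zero_add] at h4
    exact hβ h4

/-- Iterated descent. -/
lemma descent [DecidableEq A] (hform : IsSymForm form)
    (hnd : ∀ a : A, (∀ b, form a b = 0) → a = 0)
    (hPli : LinearIndependent ℤ (fun p : P => (p : A)))
    (hPspan : Submodule.span ℤ P = ⊤) :
    ∀ d : ℕ, ∀ s : Finset A, ↑s ⊆ P → Module.finrank ℚ (Kspace form s) ≤ d →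
    ∃ t : Finset A, ↑t ⊆ P ∧ s ⊆ t ∧ Kspace form t = ⊥ ∧
      (IsConnectedSet form ↑s → IsConnectedSet form ↑t) := by
  intro d
  induction d with
  | zero =>
    intro s hsP hr
    refine ⟨s, hsP, Finset.Subset.refl s, ?_, fun h => h⟩
    exact Submodule.finrank_eq_zero.mp (Nat.le_zero.mp hr)
  | succ d ih =>
    intro s hsP hr
    by_cases hbot : Kspace form s = ⊥
    · exact ⟨s, hsP, Finset.Subset.refl s, hbot, fun h => h⟩
    · obtain ⟨c, hc, hc0⟩ := (Submodule.ne_bot_iff _).mp hbot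
      obtain ⟨β, hβP, hβ⟩ := exists_beta hform hnd hPli hPspan hsP hc hc0
      obtain ⟨hlt, hβs⟩ := Kspace_insert_lt hform hc hβ
      have hfr : Module.finrank ℚ (Kspace form (insert β s)) ≤ d := by
        have := Submodule.finrank_lt_finrank_of_lt hlt
        omega
      obtain ⟨t, htP, hst, htbot, htconn⟩ := ih (insert β s)
        (by rw [Finset.coe_insert]; exact Set.insert_subset_iff.mpr ⟨hβP, hsP⟩) hfr
      refine ⟨t, htP, (Finset.subset_insert β s).trans hst, htbot, ?_⟩
      intro hconn
      apply htconn
      obtain ⟨p, hp, hpβ⟩ : ∃ p ∈ s, form p β ≠ 0 := by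
        by_contra h
        push_neg at h
        exact hβ (Finset.sum_eq_zero fun q hq => by rw [h q hq, mul_zero])
      exact isConnectedSet_insert hform.symm hconn hp hpβ

/-- Triviality of the rational radical gives nondegeneracy on the generated subgroup. -/
lemma nondeg_of_Kbot (hform : IsSymForm form) {t : Finset A}
    (hbot : Kspace form t = ⊥) :
    ∀ a ∈ AddSubgroup.closure (↑t : Set A),
      (∀ b ∈ AddSubgroup.closure (↑t : Set A), form a b = 0) → a = 0 := by
  intro a ha hab
  have haspan : a ∈ Submodule.span ℤ (↑t : Set A) := by
    have h1 : AddSubgroup.closure (↑t : Set A)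
        ≤ (Submodule.span ℤ (↑t : Set A)).toAddSubgroup :=
      (AddSubgroup.closure_le _).mpr (fun x hx => Submodule.subset_span hx)
    exact h1 ha
  obtain ⟨f, -, hf⟩ := Submodule.mem_span_finset.mp haspan
  set c : A →₀ ℚ := ∑ q ∈ t, Finsupp.single q ((f q : ℚ)) with hcdef
  have hcval : ∀ q ∈ t, c q = (f q : ℚ) := by
    intro q hq
    rw [hcdef, Finsupp.finset_sum_apply, Finset.sum_eq_single q]
    · simp
    · intro b _ hbq
      exact Finsupp.single_eq_of_ne' hbq
    · intro h
      exact absurd hq h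
  have hcmem : c ∈ Kspace form t := by
    rw [mem_Kspace]
    constructor
    · intro q hq
      rw [hcdef, Finsupp.finset_sum_apply]
      exact Finset.sum_eq_zero fun b hb =>
        Finsupp.single_eq_of_ne' (fun hbq => hq (hbq ▸ hb))
    · intro p hp
      have h1 : ∑ q ∈ t, (c q : F) * form q p = form a p := by
        have h0 : form a p = ∑ q ∈ t, form (f q • q) p := by
          rw [← hf]
          exact map_sum (hform.toHom p) (fun q => f q • q) t
        rw [h0]
        refine Finset.sum_congr rfl fun q hq => ?_
        have h2 : form (f q • q) p = ((f q : ℤ) : F) * form q p := hform.zsmul_left (f q) q p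
        rw [h2, hcval q hq]
        push_cast
        ring
      rw [h1]
      exact hab p (AddSubgroup.subset_closure (Finset.mem_coe.mpr hp))
  have hc0 : c = 0 := by
    rw [hbot] at hcmem
    simpa using hcmem
  have hf0 : ∀ q ∈ t, f q = 0 := by
    intro q hq
    have h3 := hcval q hq
    rw [hc0] at h3
    have h4 : ((f q : ℚ)) = 0 := by simpa using h3.symm
    exact_mod_cast h4
  rw [← hf]
  exact Finset.sum_eq_zero fun q hq => by rw [hf0 q hq, zero_smul]

end Core

theorem stmt17 {F : Type*} [Field F] [CharZero F] {A : Type*} [AddCommGroup A]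
    (form : A → A → F) (R : Set A) (h : IsLFRSS form R) (hirr : IsIrreducibleRSS form R)
    (P : Set A) (hP : IsBase form R P) :
    ∀ X : Set A, X ⊆ P → X.Finite →
      (∃ Y : Set A, Y ⊆ P ∧ Y.Finite ∧ X ⊆ Y ∧
        ∀ a ∈ AddSubgroup.closure Y, (∀ b ∈ AddSubgroup.closure Y, form a b = 0) → a = 0) ∧
      (IsConnectedSet form X →
        ∃ Y : Set A, Y ⊆ P ∧ Y.Finite ∧ X ⊆ Y ∧ IsConnectedSet form Y ∧
          ∀ a ∈ AddSubgroup.closure Y, (∀ b ∈ AddSubgroup.closure Y, form a b = 0) → a = 0) := by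
  classical
  obtain ⟨hE, hnd⟩ := h
  obtain ⟨⟨hPR, hPli, hPspan'⟩, -⟩ := hP
  have hform : IsSymForm form := hE.toIsSymForm
  have hRtop : Submodule.span ℤ R = ⊤ := by
    rw [Submodule.eq_top_iff']
    intro x
    have hx : x ∈ AddSubgroup.closure R := hE.closure_eq_top ▸ AddSubgroup.mem_top x
    have h1 : AddSubgroup.closure R ≤ (Submodule.span ℤ R).toAddSubgroup :=
      (AddSubgroup.closure_le _).mpr (fun y hy => Submodule.subset_span hy)
    exact h1 hx
  have hPspan : Submodule.span ℤ P = ⊤ := hPspan'.trans hRtop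
  intro X hXP hXfin
  set s : Finset A := hXfin.toFinset with hsdef
  have hscoe : (↑s : Set A) = X := hXfin.coe_toFinset
  have hsP : (↑s : Set A) ⊆ P := hscoe ▸ hXP
  obtain ⟨t, htP, hst, htbot, htconn⟩ :=
    descent hform hnd hPli hPspan (Module.finrank ℚ (Kspace form s)) s hsP le_rfl
  have hXt : X ⊆ ↑t := hscoe ▸ (Finset.coe_subset.mpr hst)
  have hndt := nondeg_of_Kbot hform htbot
  constructor
  · exact ⟨↑t, htP, t.finite_toSet, hXt, hndt⟩
  · intro hXconn
    refine ⟨↑t, htP, t.finite_toSet, hXt, ?_, hndt⟩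
    exact htconn (hscoe ▸ hXconn)
end
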